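/- arXiv:2206.08860 — 4 statements merged into one kernel-verified Lean document; each statement's English description precedes it below -/
import Mathlib

section
/- Let G be a connected finite simple graph on an odd number n ≥ 3 of vertices. If there exists a vertex v such that each distance set N_i(v), for i = 1, …, ε(v), is an independent set, then q(G) ≥ 3. -/
open Matrix

/-- `SOfGraph G` is the set of real symmetric matrices whose off-diagonal zero
pattern is described by the graph `G` (diagonal entries unrestricted). -/
def SOfGraph {V : Type*} [Fintype V] [DecidableEq V] (G : SimpleGraph V) :
    Set (Matrix V V ℝ) :=
  {A | A.IsSymm ∧ ∀ i j : V, i ≠ j → (A i j ≠ 0 ↔ G.Adj i j)}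

/-- `qGraph G` is the minimum number of distinct eigenvalues over matrices in `SOfGraph G`. -/
noncomputable def qGraph {V : Type*} [Fintype V] [DecidableEq V] (G : SimpleGraph V) : ℕ :=
  sInf ((fun A => (spectrum ℝ A).ncard) '' SOfGraph G)

/-- Eccentricity of a vertex: maximum graph distance to any vertex. -/
noncomputable def graphEccent {V : Type*} [Fintype V] (G : SimpleGraph V) (v : V) : ℕ :=
  Finset.univ.sup fun w => G.dist v w

/-- Double-ended candle `G_k` on `2k` vertices: vertex `i` lies in level `(i+1)/2`,
so level `0` and level `k` have one vertex each and intermediate levels have two;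
two vertices are adjacent iff they lie in consecutive levels. -/
def doubleCandle (k : ℕ) : SimpleGraph (Fin (2 * k)) :=
  SimpleGraph.fromRel fun a b => (a.val + 1) / 2 + 1 = (b.val + 1) / 2

/-- Single-ended candle `G'_k` on `2k+1` vertices: vertex `i` lies in level `(i+1)/2`,
so level `0` has one vertex and levels `1,…,k` have two vertices each; two distinct
vertices are adjacent iff they lie in consecutive levels or both lie in level `k`. -/
def singleCandle (k : ℕ) : SimpleGraph (Fin (2 * k + 1)) :=
  SimpleGraph.fromRel fun a b =>
    (a.val + 1) / 2 + 1 = (b.val + 1) / 2 ∨ ((a.val + 1) / 2 = k ∧ (b.val + 1) / 2 = k)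

section Aux

variable {V : Type*} [Fintype V] [DecidableEq V]

lemma sOfGraph_nonempty (G : SimpleGraph V) [DecidableRel G.Adj] : (SOfGraph G).Nonempty := by
  refine ⟨Matrix.of fun i j => if G.Adj i j then 1 else 0, ?_, ?_⟩
  · ext i j
    simp [SimpleGraph.adj_comm]
  · intro i j hij
    by_cases h : G.Adj i j <;> simp [h]

lemma key_lemma (G : SimpleGraph V) (hconn : G.Connected) (hodd : Odd (Fintype.card V))
    (hn : 3 ≤ Fintype.card V) (v : V)
    (hind : ∀ w₁ w₂ : V, G.dist v w₁ = G.dist v w₂ → ¬ G.Adj w₁ w₂)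
    (A : Matrix V V ℝ) (hA : A ∈ SOfGraph G) : 3 ≤ (spectrum ℝ A).ncard := by
  classical
  obtain ⟨hsymm, hpat⟩ := hA
  by_contra hlt
  push_neg at hlt
  have hcard : (spectrum ℝ A).ncard ≤ 2 := by omega
  have hVne : Nonempty V := Fintype.card_pos_iff.mp (by omega)
  obtain ⟨i0⟩ := hVne
  have herm : A.IsHermitian := by
    show Aᴴ = A
    ext i j
    simp only [Matrix.conjTranspose_apply, star_trivial]
    exact congrFun (congrFun hsymm i) j
  set e : V → ℝ := herm.eigenvalues with he
  have hes : ∀ i, e i ∈ spectrum ℝ A := fun i => herm.eigenvalues_mem_spectrum_real i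
  have hfin : (spectrum ℝ A).Finite := Matrix.finite_spectrum A
  -- extract at most two eigenvalues
  obtain ⟨lam, mu, hlm⟩ : ∃ lam mu : ℝ, ∀ i, e i = lam ∨ e i = mu := by
    by_contra hcon
    push_neg at hcon
    obtain ⟨i1, h1a, h1b⟩ := hcon (e i0) (e i0)
    obtain ⟨i2, h2a, h2b⟩ := hcon (e i0) (e i1)
    have hsub : ({e i2, e i1, e i0} : Set ℝ) ⊆ spectrum ℝ A := by
      intro x hx
      rcases hx with h | h | h <;> subst h <;> exact hes _
    have h3 : ({e i2, e i1, e i0} : Set ℝ).ncard = 3 := by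
      rw [Set.ncard_insert_of_notMem (by simp [h2a, h2b]) (Set.toFinite _),
        Set.ncard_pair (fun h => h1a h)]
    have := Set.ncard_le_ncard hsub hfin
    omega
  -- spectral theorem pieces
  set U : Matrix V V ℝ := (herm.eigenvectorUnitary : Matrix V V ℝ) with hUdef
  have hU1 : U * star U = 1 := Matrix.mem_unitaryGroup_iff.mp herm.eigenvectorUnitary.2
  have hU2 : star U * U = 1 := Matrix.mem_unitaryGroup_iff'.mp herm.eigenvectorUnitary.2
  have hspec : A = U * Matrix.diagonal e * star U := by
    have h := herm.spectral_theorem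
    rwa [show RCLike.ofReal ∘ herm.eigenvalues = e by
      rw [RCLike.ofReal_real_eq_id, Function.id_comp]] at h
  set t : ℝ := (lam + mu) / 2 with ht
  set c : ℝ := (lam - mu) / 2 with hc
  set B : Matrix V V ℝ := A - t • 1 with hB
  have hdsub : Matrix.diagonal (fun i => e i - t)
      = Matrix.diagonal e - t • (1 : Matrix V V ℝ) := by
    rw [Matrix.smul_one_eq_diagonal, ← Matrix.diagonal_sub]
  have hBeq : B = U * Matrix.diagonal (fun i => e i - t) * star U := by
    rw [hB, hspec, hdsub, Matrix.mul_sub, Matrix.sub_mul, Matrix.mul_smul, Matrix.mul_one,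
      Matrix.smul_mul, hU1]
  have hB2 : B * B = (c ^ 2) • (1 : Matrix V V ℝ) := by
    have hassoc : (U * Matrix.diagonal (fun i => e i - t) * star U) *
        (U * Matrix.diagonal (fun i => e i - t) * star U)
        = U * (Matrix.diagonal (fun i => e i - t) * (star U * U)
          * Matrix.diagonal (fun i => e i - t)) * star U := by
      simp only [Matrix.mul_assoc]
    rw [hBeq, hassoc, hU2, Matrix.mul_one, Matrix.diagonal_mul_diagonal]
    have hdd : (fun i => (e i - t) * (e i - t)) = fun _ : V => c ^ 2 := by
      funext i
      rcases hlm i with h | h <;> rw [h, ht, hc] <;> ring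
    rw [hdd, show Matrix.diagonal (fun _ : V => c ^ 2) = (c ^ 2) • (1 : Matrix V V ℝ) from
      (Matrix.smul_one_eq_diagonal _).symm]
    rw [Matrix.mul_smul, Matrix.mul_one, Matrix.smul_mul, hU1]
  -- entrywise facts about B
  have hAs : ∀ i j, A i j = A j i := by
    intro i j
    conv_lhs => rw [← hsymm]
    rfl
  have hBs : ∀ i j, B i j = B j i := by
    intro i j
    simp only [hB, Matrix.sub_apply, Matrix.smul_apply, Matrix.one_apply, hAs i j]
    by_cases h : i = j <;> simp [h, eq_comm]
  have hBoff : ∀ i j, i ≠ j → B i j = A i j := by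
    intro i j h
    simp [hB, Matrix.one_apply_ne h]
  have hBadj : ∀ i j, i ≠ j → (B i j ≠ 0 ↔ G.Adj i j) := by
    intro i j h
    rw [hBoff i j h]
    exact hpat i j h
  -- parity of distances across edges
  have hpar : ∀ x y, G.Adj x y → (G.dist v x) % 2 ≠ (G.dist v y) % 2 := by
    intro x y hxy
    have hd1 : G.dist x y = 1 := SimpleGraph.dist_eq_one_iff_adj.mpr hxy
    have hd2 : G.dist y x = 1 := SimpleGraph.dist_eq_one_iff_adj.mpr hxy.symm
    have t1 := hconn.dist_triangle (u := v) (v := x) (w := y)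
    have t2 := hconn.dist_triangle (u := v) (v := y) (w := x)
    have hne : G.dist v x ≠ G.dist v y := fun h => hind x y h hxy
    omega
  -- each vertex has a neighbor
  have hnbr : ∀ i, ∃ k, G.Adj i k := by
    intro i
    obtain ⟨w, hw⟩ := Fintype.exists_ne_of_one_lt_card (by omega) i
    obtain ⟨p⟩ := hconn.preconnected i w
    cases p with
    | nil => exact absurd rfl hw
    | cons h q => exact ⟨_, h⟩
  -- diagonal relation along edges
  have hdiag : ∀ i j, G.Adj i j → B i i + B j j = 0 := by
    intro i j hij
    have hijne : i ≠ j := hij.ne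
    have hBij : B i j ≠ 0 := (hBadj i j hijne).mpr hij
    have h0 : (B * B) i j = 0 := by
      rw [hB2]
      simp [Matrix.smul_apply, Matrix.one_apply_ne hijne]
    rw [Matrix.mul_apply] at h0
    have hrest : ∀ k ∈ Finset.univ, k ∉ ({i, j} : Finset V) → B i k * B k j = 0 := by
      intro k _ hk
      simp only [Finset.mem_insert, Finset.mem_singleton, not_or] at hk
      by_contra hkk
      have h1 : B i k ≠ 0 := fun h => hkk (by rw [h, zero_mul])
      have h2 : B k j ≠ 0 := fun h => hkk (by rw [h, mul_zero])
      have a1 : G.Adj i k := (hBadj i k (Ne.symm hk.1)).mp h1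
      have a2 : G.Adj k j := (hBadj k j hk.2).mp h2
      have p1 := hpar i k a1
      have p2 := hpar k j a2
      have p3 := hpar i j hij
      omega
    have hsum : ∑ k, B i k * B k j = ∑ k ∈ ({i, j} : Finset V), B i k * B k j :=
      (Finset.sum_subset (Finset.subset_univ _) hrest).symm
    rw [hsum, Finset.sum_pair hijne] at h0
    rw [hBs j j] at h0
    have hfac : (B i i + B j j) * B i j = 0 := by
      rw [hBs i j] at h0 ⊢
      linarith [h0]
    rcases mul_eq_zero.mp hfac with h | h
    · exact h
    · exact absurd h hBij
  -- row sums of squares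
  have hsq : ∀ i, ∑ k, (B i k) ^ 2 = c ^ 2 := by
    intro i
    have h0 : (B * B) i i = c ^ 2 := by
      rw [hB2]; simp [Matrix.smul_apply, Matrix.one_apply_eq]
    rw [Matrix.mul_apply] at h0
    rw [← h0]
    refine Finset.sum_congr rfl fun k _ => ?_
    rw [hBs i k]; ring
  have hdd2 : ∀ i, (B i i) ^ 2 < c ^ 2 := by
    intro i
    obtain ⟨k, hik⟩ := hnbr i
    have hikne : i ≠ k := hik.ne
    have hBik : B i k ≠ 0 := (hBadj i k hikne).mpr hik
    have hle : (B i i) ^ 2 + (B i k) ^ 2 ≤ ∑ m, (B i m) ^ 2 := by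
      have hsub := Finset.sum_le_sum_of_subset_of_nonneg
        (Finset.subset_univ ({i, k} : Finset V)) (fun x _ _ => sq_nonneg (B i x))
      rwa [Finset.sum_pair hikne] at hsub
    have hpos : 0 < (B i k) ^ 2 :=
      lt_of_le_of_ne (sq_nonneg _) (Ne.symm (pow_ne_zero 2 hBik))
    rw [hsq i] at hle
    linarith
  -- zero-diagonal part
  set D : Matrix V V ℝ := Matrix.diagonal (fun i => B i i) with hD
  set M : Matrix V V ℝ := B - D with hM
  have hMapp : ∀ i j, M i j = if i = j then 0 else B i j := by
    intro i j
    by_cases h : i = j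
    · subst h
      simp [hM, hD, Matrix.sub_apply]
    · simp [hM, hD, Matrix.sub_apply, Matrix.diagonal_apply_ne _ h, h]
  have hDM : D * M + M * D = 0 := by
    ext i j
    rw [Matrix.add_apply, hD, Matrix.diagonal_mul, Matrix.mul_diagonal, Matrix.zero_apply]
    by_cases h : i = j
    · subst h
      rw [hMapp]
      simp
    · rw [hMapp i j, if_neg h]
      by_cases hadj : G.Adj i j
      · have hd := hdiag i j hadj
        calc B i i * B i j + B i j * B j j = B i j * (B i i + B j j) := by ring
          _ = 0 := by rw [hd, mul_zero]
      · have hBz : B i j = 0 := by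
          by_contra hz
          exact hadj ((hBadj i j h).mp hz)
        rw [hBz]
        ring
  have hMM : M * M = Matrix.diagonal (fun i => c ^ 2 - (B i i) ^ 2) := by
    have hBDM : B = D + M := by
      rw [hM]
      abel
    have hexp : B * B = D * D + (D * M + M * D) + M * M := by
      rw [hBDM]
      noncomm_ring
    rw [hDM, add_zero] at hexp
    have hMM' : M * M = B * B - D * D := by
      rw [hexp]
      abel
    rw [hMM', hB2, hD, Matrix.diagonal_mul_diagonal]
    ext i j
    by_cases h : i = j
    · subst h
      simp only [Matrix.sub_apply, Matrix.smul_apply, Matrix.one_apply_eq,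
        Matrix.diagonal_apply_eq, smul_eq_mul, mul_one]
      ring
    · simp [Matrix.sub_apply, Matrix.smul_apply, Matrix.one_apply_ne h,
        Matrix.diagonal_apply_ne _ h]
  have hdet2 : M.det * M.det = ∏ i, (c ^ 2 - (B i i) ^ 2) := by
    rw [← Matrix.det_mul, hMM, Matrix.det_diagonal]
  have hdetne : M.det ≠ 0 := by
    intro h
    rw [h, mul_zero] at hdet2
    have hprod : (0 : ℝ) < ∏ i, (c ^ 2 - (B i i) ^ 2) :=
      Finset.prod_pos fun i _ => sub_pos.mpr (hdd2 i)
    rw [← hdet2] at hprod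
    exact lt_irrefl 0 hprod
  -- sign matrix
  set S : Matrix V V ℝ := Matrix.diagonal (fun i => (-1 : ℝ) ^ (G.dist v i)) with hS
  have hsign : ∀ i j, G.Adj i j →
      ((-1 : ℝ) ^ (G.dist v i)) * ((-1 : ℝ) ^ (G.dist v j)) = -1 := by
    intro i j hij
    have h := hpar i j hij
    have hoddij : Odd (G.dist v i + G.dist v j) := Nat.odd_iff.mpr (by omega)
    rw [← pow_add]
    exact Odd.neg_one_pow hoddij
  have hSMS : S * M * S = -M := by
    ext i j
    rw [hS, Matrix.mul_diagonal, Matrix.diagonal_mul, Matrix.neg_apply]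
    by_cases h : i = j
    · subst h
      rw [hMapp]
      simp
    · rw [hMapp i j, if_neg h]
      by_cases hadj : G.Adj i j
      · calc (-1 : ℝ) ^ (G.dist v i) * B i j * (-1) ^ (G.dist v j)
            = ((-1 : ℝ) ^ (G.dist v i) * (-1) ^ (G.dist v j)) * B i j := by ring
          _ = -B i j := by rw [hsign i j hadj]; ring
      · have hBz : B i j = 0 := by
          by_contra hz
          exact hadj ((hBadj i j h).mp hz)
        rw [hBz]
        ring
  have hdetS2 : S.det * S.det = 1 := by
    rw [← Matrix.det_mul, hS, Matrix.diagonal_mul_diagonal]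
    have hone : (fun i => (-1 : ℝ) ^ (G.dist v i) * (-1) ^ (G.dist v i)) = fun _ : V => (1 : ℝ) := by
      funext i
      rw [← pow_add]
      exact Even.neg_one_pow ⟨G.dist v i, rfl⟩
    rw [hone, Matrix.diagonal_one, Matrix.det_one]
  have hkey : M.det = -M.det := by
    have hc := congrArg Matrix.det hSMS
    rw [Matrix.det_mul, Matrix.det_mul, Matrix.det_neg, Odd.neg_one_pow hodd, neg_one_mul] at hc
    calc M.det = (S.det * S.det) * M.det := by rw [hdetS2, one_mul]
      _ = S.det * M.det * S.det := by ring
      _ = -M.det := hc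
  have : M.det = 0 := by linarith
  exact hdetne this

end Aux

/-- If `G` is connected on an odd number `n ≥ 3` of vertices and there is a vertex
`v` such that each distance set `N_i(v)` is independent, then `q(G) ≥ 3`. -/
theorem stmt14 {V : Type*} [Fintype V] [DecidableEq V] (G : SimpleGraph V)
    (hconn : G.Connected) (hodd : Odd (Fintype.card V)) (hn : 3 ≤ Fintype.card V)
    (v : V)
    (hind : ∀ w₁ w₂ : V, G.dist v w₁ = G.dist v w₂ → ¬ G.Adj w₁ w₂) :
    3 ≤ qGraph G := by
  classical
  have hne : ((fun A => (spectrum ℝ A).ncard) '' SOfGraph G).Nonempty :=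
    (sOfGraph_nonempty G).image _
  obtain ⟨A, hA, hAe⟩ := Nat.sInf_mem hne
  rw [qGraph, ← hAe]
  exact key_lemma G hconn hodd hn v hind A hA
end

section
/- For a finite simple graph G, the set S(G) contains a combinatorially orthogonal matrix if and only if the matrix A(G) + I is combinatorially orthogonal, where A(G) is the adjacency matrix of G over ℝ and I is the identity matrix. -/
open Matrix

/-- Two vectors are combinatorially orthogonal if the number of indices where both
are nonzero is not equal to `1`. -/
def CombOrthVec {n : Type*} (x y : n → ℝ) : Prop :=
  {i : n | x i ≠ 0 ∧ y i ≠ 0}.ncard ≠ 1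

/-- A square matrix is combinatorially orthogonal if every pair of distinct rows is
combinatorially orthogonal and every pair of distinct columns is combinatorially
orthogonal. -/
def CombOrthMatrix {n : Type*} (A : Matrix n n ℝ) : Prop :=
  (∀ i j : n, i ≠ j → CombOrthVec (A i) (A j)) ∧
  (∀ i j : n, i ≠ j → CombOrthVec (fun k => A k i) (fun k => A k j))

private lemma Bne {V : Type*} [Fintype V] [DecidableEq V] (G : SimpleGraph V)
    [DecidableRel G.Adj] (i j : V) :
    (G.adjMatrix ℝ + 1) i j ≠ 0 ↔ (i = j ∨ G.Adj i j) := by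
  by_cases h : i = j
  · subst h; simp [Matrix.add_apply, Matrix.one_apply]
  · simp [Matrix.add_apply, Matrix.one_apply_ne h, h]

private lemma Bsymm {V : Type*} [Fintype V] [DecidableEq V] (G : SimpleGraph V)
    [DecidableRel G.Adj] : (G.adjMatrix ℝ + 1).IsSymm := by
  rw [Matrix.IsSymm]
  ext i j
  simp [Matrix.add_apply, Matrix.one_apply, SimpleGraph.adj_comm, eq_comm]

/-- `S(G)` contains a combinatorially orthogonal matrix iff `A(G) + I` is
combinatorially orthogonal. -/
theorem stmt17 {V : Type*} [Fintype V] [DecidableEq V] (G : SimpleGraph V)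
    [DecidableRel G.Adj] :
    (∃ A ∈ SOfGraph G, CombOrthMatrix A) ↔ CombOrthMatrix (G.adjMatrix ℝ + 1) := by
  have hBsymm := Bsymm G
  constructor
  · rintro ⟨A, ⟨hsym, hpat⟩, hrow, -⟩
    have key : ∀ i j : V, i ≠ j →
        CombOrthVec ((G.adjMatrix ℝ + 1) i) ((G.adjMatrix ℝ + 1) j) := by
      intro i j hij
      by_cases hadj : G.Adj i j
      · -- {i, j} is contained in the support intersection
        have hsub : ({i, j} : Set V) ⊆
            {k | (G.adjMatrix ℝ + 1) i k ≠ 0 ∧ (G.adjMatrix ℝ + 1) j k ≠ 0} := by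
          rintro k (rfl | rfl)
          · exact ⟨(Bne G k k).mpr (Or.inl rfl), (Bne G j k).mpr (Or.inr hadj.symm)⟩
          · exact ⟨(Bne G i k).mpr (Or.inr hadj), (Bne G k k).mpr (Or.inl rfl)⟩
        have h2 : 2 ≤ {k | (G.adjMatrix ℝ + 1) i k ≠ 0 ∧ (G.adjMatrix ℝ + 1) j k ≠ 0}.ncard := by
          calc 2 = ({i, j} : Set V).ncard := (Set.ncard_pair hij).symm
          _ ≤ _ := Set.ncard_le_ncard hsub (Set.toFinite _)
        unfold CombOrthVec
        omega
      · -- the support intersections coincide with those of A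
        have heq : {k | (G.adjMatrix ℝ + 1) i k ≠ 0 ∧ (G.adjMatrix ℝ + 1) j k ≠ 0}
            = {k | A i k ≠ 0 ∧ A j k ≠ 0} := by
          ext k
          simp only [Set.mem_setOf_eq, Bne]
          by_cases hki : k = i
          · subst hki
            constructor
            · rintro ⟨-, (h | h)⟩
              · exact absurd h.symm hij
              · exact absurd h.symm hadj
            · rintro ⟨-, h⟩
              exact absurd ((hpat j k (Ne.symm hij)).mp h).symm hadj
          · by_cases hkj : k = j
            · subst hkj
              constructor
              · rintro ⟨(h | h), -⟩
                · exact absurd h hij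
                · exact absurd h hadj
              · rintro ⟨h, -⟩
                exact absurd ((hpat i k hij).mp h) hadj
            · rw [hpat i k (Ne.symm hki), hpat j k (Ne.symm hkj)]
              constructor
              · rintro ⟨(h1 | h1), (h2 | h2)⟩
                · exact absurd h1.symm hki
                · exact absurd h1.symm hki
                · exact absurd h2.symm hkj
                · exact ⟨h1, h2⟩
              · exact fun ⟨h1, h2⟩ => ⟨Or.inr h1, Or.inr h2⟩
        unfold CombOrthVec
        rw [heq]
        exact hrow i j hij
    refine ⟨key, fun i j hij => ?_⟩
    have hcol : ∀ l : V, (fun k => (G.adjMatrix ℝ + 1) k l) = (G.adjMatrix ℝ + 1) l := by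
      intro l; ext k; exact hBsymm.apply l k
    rw [hcol i, hcol j]
    exact key i j hij
  · intro h
    refine ⟨G.adjMatrix ℝ + 1, ⟨hBsymm, fun i j hij => ?_⟩, h⟩
    rw [Bne]
    simp [hij]
end

section
/- Let G be a connected finite simple graph on exactly 5 vertices. Then q(G) = 2 if and only if G contains a spanning subgraph isomorphic to the single-ended candle G'_2, i.e., there exists a bijection f from the vertex set of G'_2 to the vertex set of G such that whenever x and y are adjacent in G'_2, the vertices f(x) and f(y) are adjacent in G. -/
open Matrix

lemma isHermitian_of_isSymm {V : Type*} [Fintype V] {A : Matrix V V ℝ} (h : A.IsSymm) :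
    A.IsHermitian := by
  rw [Matrix.IsHermitian, conjTranspose_eq_transpose_of_trivial]; exact h

lemma spectrum_eq_range_eigenvalues {V : Type*} [Fintype V] [DecidableEq V]
    {A : Matrix V V ℝ} (hA : A.IsHermitian) :
    spectrum ℝ A = Set.range hA.eigenvalues := by
  have hd : A = (hA.eigenvectorUnitary : Matrix V V ℝ) * diagonal hA.eigenvalues *
      (star (hA.eigenvectorUnitary : Matrix V V ℝ)) := by
    convert hA.spectral_theorem using 2
    simp [Unitary.conjStarAlgAut_apply]
  conv_lhs => rw [hd]
  rw [Unitary.spectrum_star_right_conjugate, spectrum_diagonal]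

/-- the defining property of the projections we seek -/
def goodProj {V : Type*} [Fintype V] [DecidableEq V] (G : SimpleGraph V)
    (P : Matrix V V ℝ) : Prop :=
  P.IsSymm ∧ P * P = P ∧ ∀ i j : V, i ≠ j → (P i j ≠ 0 ↔ G.Adj i j)

section Bridge
variable {V : Type*} [Fintype V] [DecidableEq V] {G : SimpleGraph V}

lemma exists_neighbor (hconn : G.Connected) (hcard : 2 ≤ Fintype.card V) (v : V) :
    ∃ w, G.Adj v w := by
  obtain ⟨w, hw⟩ := Fintype.exists_ne_of_one_lt_card hcard v
  obtain ⟨p⟩ := hconn.preconnected v w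
  cases p with
  | nil => exact absurd rfl hw.symm
  | cons h q => exact ⟨_, h⟩

lemma spectrum_mem_of_idem {P : Matrix V V ℝ} (hidem : P * P = P) {x : ℝ}
    (hx : x ∈ spectrum ℝ P) : x = 0 ∨ x = 1 := by
  by_contra hcon
  push_neg at hcon
  obtain ⟨hx0, hx1⟩ := hcon
  apply spectrum.notMem_iff.mpr _ hx
  have halg : (algebraMap ℝ (Matrix V V ℝ)) x = x • 1 := Algebra.algebraMap_eq_smul_one x
  have h1 : (x • 1 - P) * ((x - 1) • 1 + P) = (x * (x - 1)) • (1 : Matrix V V ℝ) := by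
    simp only [Matrix.sub_mul, Matrix.mul_add, Matrix.add_mul, Matrix.mul_sub,
      smul_mul_assoc, mul_smul_comm, Matrix.one_mul, Matrix.mul_one, hidem, smul_smul]
    module
  have h2 : ((x - 1) • 1 + P) * (x • 1 - P) = (x * (x - 1)) • (1 : Matrix V V ℝ) := by
    simp only [Matrix.sub_mul, Matrix.mul_add, Matrix.add_mul, Matrix.mul_sub,
      smul_mul_assoc, mul_smul_comm, Matrix.one_mul, Matrix.mul_one, hidem, smul_smul,
      mul_comm (x-1) x]
    module
  have hne : x * (x - 1) ≠ 0 := mul_ne_zero hx0 (sub_ne_zero.mpr hx1)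
  rw [halg]
  exact ⟨⟨x • 1 - P, (x * (x - 1))⁻¹ • ((x - 1) • 1 + P),
    by rw [mul_smul_comm, h1, smul_smul, inv_mul_cancel₀ hne, one_smul],
    by rw [smul_mul_assoc, h2, smul_smul, inv_mul_cancel₀ hne, one_smul]⟩, rfl⟩

end Bridge

section Bridge2
variable {V : Type*} [Fintype V] [DecidableEq V] {G : SimpleGraph V}

set_option linter.unusedSectionVars false

lemma two_le_ncard_spectrum (hconn : G.Connected) (hcard : Fintype.card V = 5)
    {B : Matrix V V ℝ} (hB : B ∈ SOfGraph G) : 2 ≤ (spectrum ℝ B).ncard := by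
  have hherm := isHermitian_of_isSymm hB.1
  have hspec := spectrum_eq_range_eigenvalues hherm
  have hfin : (spectrum ℝ B).Finite := by rw [hspec]; exact Set.finite_range _
  have hne : (spectrum ℝ B).Nonempty := by
    rw [hspec]
    have : Nonempty V := Fintype.card_pos_iff.mp (by omega)
    exact Set.range_nonempty _
  by_contra hlt
  push_neg at hlt
  interval_cases h : (spectrum ℝ B).ncard
  · exact absurd ((Set.ncard_eq_zero hfin).mp h) (Set.nonempty_iff_ne_empty.mp hne)
  · obtain ⟨c, hc⟩ := Set.ncard_eq_one.mp h
    -- all eigenvalues equal c, so B is scalar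
    have hall : ∀ i, hherm.eigenvalues i = c := by
      intro i
      have : hherm.eigenvalues i ∈ spectrum ℝ B := hherm.eigenvalues_mem_spectrum_real i
      rw [hc] at this; exact this
    have hBc : B = c • 1 := by
      have hd : B = (hherm.eigenvectorUnitary : Matrix V V ℝ) * diagonal hherm.eigenvalues *
          (star (hherm.eigenvectorUnitary : Matrix V V ℝ)) := by
        convert hherm.spectral_theorem using 2
        simp [Unitary.conjStarAlgAut_apply]
      have hdiag : diagonal hherm.eigenvalues = c • (1 : Matrix V V ℝ) := by
        rw [smul_one_eq_diagonal]; exact congrArg diagonal (funext hall)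
      rw [hd, hdiag, mul_smul_comm, smul_mul_assoc, Matrix.mul_one,
        (Matrix.mem_unitaryGroup_iff).mp hherm.eigenvectorUnitary.2]
    haveI : Nonempty V := Fintype.card_pos_iff.mp (by omega)
    obtain ⟨u, hu⟩ := Fintype.exists_ne_of_one_lt_card (by omega) (Classical.arbitrary V)
    obtain ⟨w, hw⟩ := exists_neighbor hconn (by omega) u
    have hne' : u ≠ w := hw.ne
    have := (hB.2 u w hne').mpr hw
    rw [hBc] at this
    simp [Matrix.one_apply_ne hne'] at this


lemma goodProj_of_qGraph_eq_two (hconn : G.Connected) (hcard : Fintype.card V = 5)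
    (hq : qGraph G = 2) : ∃ P, goodProj G P := by
  classical
  -- the image set is nonempty (adjacency matrix belongs)
  have hAdjmem : (Matrix.of fun i j => if G.Adj i j then (1:ℝ) else 0) ∈ SOfGraph G := by
    constructor
    · ext i j
      simp only [Matrix.transpose_apply, Matrix.of_apply]
      by_cases h : G.Adj i j
      · rw [if_pos h, if_pos h.symm]
      · rw [if_neg h, if_neg (fun hh => h hh.symm)]
    · intro i j hij
      by_cases h : G.Adj i j <;> simp [h]
  have hSne : ((fun A => (spectrum ℝ A).ncard) '' SOfGraph G).Nonempty :=
    ⟨_, ⟨_, hAdjmem, rfl⟩⟩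
  have hmem : qGraph G ∈ ((fun A => (spectrum ℝ A).ncard) '' SOfGraph G) :=
    Nat.sInf_mem hSne
  rw [hq] at hmem
  obtain ⟨A, hA, hA2⟩ := hmem
  have hherm := isHermitian_of_isSymm hA.1
  have hspec := spectrum_eq_range_eigenvalues hherm
  obtain ⟨lam, mu, hlm, hpair⟩ := Set.ncard_eq_two.mp hA2
  have hmem' : ∀ i, hherm.eigenvalues i = lam ∨ hherm.eigenvalues i = mu := by
    intro i
    have : hherm.eigenvalues i ∈ spectrum ℝ A := hherm.eigenvalues_mem_spectrum_real i
    rw [hpair] at this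
    exact this
  -- the key polynomial identity
  have hkey : (A - lam • 1) * (A - mu • 1) = 0 := by
    have hd : A = (hherm.eigenvectorUnitary : Matrix V V ℝ) * diagonal hherm.eigenvalues *
        (star (hherm.eigenvectorUnitary : Matrix V V ℝ)) := by
      convert hherm.spectral_theorem using 2
      simp [Unitary.conjStarAlgAut_apply]
    have hsc : ∀ t : ℝ, A - t • 1 = (hherm.eigenvectorUnitary : Matrix V V ℝ) *
        diagonal (fun i => hherm.eigenvalues i - t) *
        (star (hherm.eigenvectorUnitary : Matrix V V ℝ)) := by
      intro t
      have h1 : (t • 1 : Matrix V V ℝ) = (hherm.eigenvectorUnitary : Matrix V V ℝ) *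
          diagonal (fun _ => t) * (star (hherm.eigenvectorUnitary : Matrix V V ℝ)) := by
        rw [← smul_one_eq_diagonal, mul_smul_comm, smul_mul_assoc, Matrix.mul_one,
          (Matrix.mem_unitaryGroup_iff).mp hherm.eigenvectorUnitary.2]
      conv_lhs => rw [hd, h1]
      rw [← Matrix.sub_mul, ← Matrix.mul_sub, diagonal_sub]
    rw [hsc lam, hsc mu]
    simp only [Matrix.mul_assoc]
    rw [← Matrix.mul_assoc (star (hherm.eigenvectorUnitary : Matrix V V ℝ))
        (hherm.eigenvectorUnitary : Matrix V V ℝ),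
      (Matrix.mem_unitaryGroup_iff').mp hherm.eigenvectorUnitary.2, Matrix.one_mul,
      ← Matrix.mul_assoc (diagonal _), diagonal_mul_diagonal]
    have hfun : (fun i => (hherm.eigenvalues i - lam) * (hherm.eigenvalues i - mu)) =
        fun _ : V => (0:ℝ) := by
      funext i; rcases hmem' i with h | h <;> rw [h] <;> ring
    rw [hfun, diagonal_zero, Matrix.zero_mul, Matrix.mul_zero]
  have hlmne : lam - mu ≠ 0 := sub_ne_zero.mpr hlm
  refine ⟨(lam - mu)⁻¹ • (A - mu • 1), ⟨?_, ?_, ?_⟩⟩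
  · unfold Matrix.IsSymm
    rw [transpose_smul, transpose_sub, transpose_smul, transpose_one, hA.1]
  · have expand : (A - mu • 1) * (A - mu • 1) = (lam - mu) • (A - mu • 1) := by
      have egen : ∀ X Y : Matrix V V ℝ, X * X = (X - Y) * X + Y * X := by
        intro X Y; rw [Matrix.sub_mul]; abel
      have e1 := egen (A - mu • 1) (A - lam • 1)
      rw [hkey, add_zero] at e1
      have e2 : (A - mu • 1) - (A - lam • 1) = (lam - mu) • (1 : Matrix V V ℝ) := by
        rw [sub_smul]; module
      rw [e2, smul_mul_assoc, Matrix.one_mul] at e1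
      exact e1
    rw [smul_mul_assoc, mul_smul_comm, expand, smul_smul, smul_smul]
    congr 1
    field_simp
  · intro i j hij
    rw [← hA.2 i j hij]
    simp only [Matrix.smul_apply, Matrix.sub_apply, Matrix.smul_apply,
      Matrix.one_apply_ne hij, smul_eq_mul, mul_zero, sub_zero]
    constructor
    · intro h hc; rw [hc] at h; simp at h
    · intro h; exact mul_ne_zero (inv_ne_zero hlmne) h

lemma qGraph_eq_two_of_goodProj (hconn : G.Connected) (hcard : Fintype.card V = 5)
    {P : Matrix V V ℝ} (hP : goodProj G P) : qGraph G = 2 := by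
  obtain ⟨hsym, hidem, hpatt⟩ := hP
  have hPmem : P ∈ SOfGraph G := ⟨hsym, hpatt⟩
  -- G has an edge
  haveI : Nonempty V := Fintype.card_pos_iff.mp (by omega)
  obtain ⟨u, hu⟩ := exists_neighbor hconn (by omega) (Classical.arbitrary V)
  have huv := (hpatt _ _ hu.ne).mpr hu
  have hP1 : P ≠ 1 := by
    intro h; rw [h] at huv; exact huv (Matrix.one_apply_ne hu.ne)
  have hP0 : P ≠ 0 := by intro h; rw [h] at huv; exact huv rfl
  have hspec : spectrum ℝ P = {0, 1} := by
    apply Set.eq_of_subset_of_subset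
    · intro x hx
      rcases spectrum_mem_of_idem hidem hx with h | h <;> simp [h]
    · rintro x (rfl | rfl)
      · rw [spectrum.zero_mem_iff]
        intro hunit
        obtain ⟨B, hB⟩ := hunit.exists_left_inv
        apply hP1
        calc P = 1 * P := (Matrix.one_mul P).symm
        _ = B * P * P := by rw [hB]
        _ = B * (P * P) := by rw [Matrix.mul_assoc]
        _ = B * P := by rw [hidem]
        _ = 1 := hB
      · have h1 : (1:ℝ) ∈ spectrum ℝ P ↔ ¬IsUnit (1 - P) := by
          rw [spectrum.mem_iff, Algebra.algebraMap_eq_smul_one, one_smul]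
        rw [h1]
        intro hunit
        obtain ⟨B, hB⟩ := hunit.exists_left_inv
        apply hP0
        have hidem' : (1 - P) * (1 - P) = 1 - P := by
          rw [Matrix.mul_sub, Matrix.mul_one, Matrix.sub_mul, Matrix.one_mul, hidem]
          simp
        have : (1 - P : Matrix V V ℝ) = 1 := by
          calc (1 - P : Matrix V V ℝ) = 1 * (1 - P) := (Matrix.one_mul _).symm
          _ = B * (1 - P) * (1 - P) := by rw [hB]
          _ = B * ((1 - P) * (1 - P)) := by rw [Matrix.mul_assoc]
          _ = B * (1 - P) := by rw [hidem']
          _ = 1 := hB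
        exact sub_eq_self.mp this
  have h2 : (2 : ℕ) ∈ ((fun A => (spectrum ℝ A).ncard) '' SOfGraph G) := by
    refine ⟨P, hPmem, ?_⟩
    show (spectrum ℝ P).ncard = 2
    rw [hspec, Set.ncard_pair (by norm_num : (0:ℝ) ≠ 1)]
  refine le_antisymm (Nat.sInf_le h2) ?_
  apply le_csInf ⟨2, h2⟩
  rintro b ⟨B, hB, rfl⟩
  exact two_le_ncard_spectrum hconn hcard hB

end Bridge2
instance candleDec (k : ℕ) : DecidableRel ((singleCandle k).Adj) := fun a b =>
  decidable_of_iff' _ (SimpleGraph.fromRel_adj _ a b)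

lemma candle_master {V : Type*} [Fintype V] [DecidableEq V] (G : SimpleGraph V)
    (hcard : Fintype.card V = 5) (v0 v1 v2 v3 v4 : V)
    (n01 : v0 ≠ v1) (n02 : v0 ≠ v2) (n03 : v0 ≠ v3) (n04 : v0 ≠ v4)
    (n12 : v1 ≠ v2) (n13 : v1 ≠ v3) (n14 : v1 ≠ v4)
    (n23 : v2 ≠ v3) (n24 : v2 ≠ v4) (n34 : v3 ≠ v4)
    (a01 : G.Adj v0 v1) (a02 : G.Adj v0 v2) (a13 : G.Adj v1 v3) (a14 : G.Adj v1 v4)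
    (a23 : G.Adj v2 v3) (a24 : G.Adj v2 v4) (a34 : G.Adj v3 v4) :
    ∃ f : Fin (2 * 2 + 1) → V, Function.Bijective f ∧
      ∀ x y : Fin (2 * 2 + 1), (singleCandle 2).Adj x y → G.Adj (f x) (f y) := by
  refine ⟨![v0, v1, v2, v3, v4], ?_, ?_⟩
  · rw [Fintype.bijective_iff_injective_and_card]
    refine ⟨?_, by simp [hcard]⟩
    have m01 := n01.symm; have m02 := n02.symm; have m03 := n03.symm; have m04 := n04.symm
    have m12 := n12.symm; have m13 := n13.symm; have m14 := n14.symm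
    have m23 := n23.symm; have m24 := n24.symm; have m34 := n34.symm
    intro x y hxy
    fin_cases x <;> fin_cases y <;> simp_all
  · intro x y h
    fin_cases x <;> fin_cases y <;>
      simp only [Matrix.cons_val_zero, Matrix.cons_val_one, Matrix.head_cons,
        Matrix.cons_val_two, Matrix.tail_cons, Matrix.cons_val_three, Matrix.cons_val_four,
        Matrix.head_fin_const] <;>
      first
        | exact absurd h (by decide)
        | exact a01 | exact a01.symm | exact a02 | exact a02.symm
        | exact a13 | exact a13.symm | exact a14 | exact a14.symm
        | exact a23 | exact a23.symm | exact a24 | exact a24.symm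
        | exact a34 | exact a34.symm
lemma goodProj_of_pattern {V : Type*} [Fintype V] [DecidableEq V] (G : SimpleGraph V)
    (f : Fin 5 → V) (hbij : Function.Bijective f) (M : Matrix (Fin 5) (Fin 5) ℝ)
    (hsym : M.IsSymm) (hidem : M * M = M)
    (h : ∀ x y : Fin 5, x ≠ y → (M x y ≠ 0 ↔ G.Adj (f x) (f y))) :
    ∃ P, goodProj G P := by
  set e := Equiv.ofBijective f hbij with he
  refine ⟨M.submatrix e.symm e.symm, ?_, ?_, ?_⟩
  · rw [Matrix.IsSymm, Matrix.transpose_submatrix, hsym]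
  · rw [Matrix.submatrix_mul_equiv, hidem]
  · intro i j hij
    have hne : e.symm i ≠ e.symm j := fun hc => hij (by simpa using congrArg e hc)
    have hh := h (e.symm i) (e.symm j) hne
    have hfi : f (e.symm i) = i := e.apply_symm_apply i
    have hfj : f (e.symm j) = j := e.apply_symm_apply j
    rw [hfi, hfj] at hh
    simpa [Matrix.submatrix_apply] using hh
noncomputable def frameWnnn : Matrix (Fin 5) (Fin 2) ℝ :=
  !![(5), (0); (-15), (-15); (-15), (15); (0), (3); (0), (4)]

lemma frameWnnn_frame : frameWnnnᵀ * frameWnnn = ((475 : ℝ)) • 1 := by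
  ext i j
  fin_cases i <;> fin_cases j <;>
    norm_num [frameWnnn, Matrix.mul_apply, Fin.sum_univ_five, Matrix.vecHead, Matrix.vecTail,
      Matrix.one_apply, Matrix.cons_val_two, Matrix.cons_val_three, Matrix.cons_val_four]

noncomputable def frameW34e : Matrix (Fin 5) (Fin 2) ℝ :=
  !![(-1), (3); (-2), (-2); (-4), (1); (-1), (-3); (-1), (0)]

lemma frameW34e_frame : frameW34eᵀ * frameW34e = ((23 : ℝ)) • 1 := by
  ext i j
  fin_cases i <;> fin_cases j <;>
    norm_num [frameW34e, Matrix.mul_apply, Fin.sum_univ_five, Matrix.vecHead, Matrix.vecTail,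
      Matrix.one_apply, Matrix.cons_val_two, Matrix.cons_val_three, Matrix.cons_val_four]

noncomputable def frameW34n : Matrix (Fin 5) (Fin 2) ℝ :=
  !![(1), (-2); (2), (0); (0), (3); (-1), (1); (-3), (-1)]

lemma frameW34n_frame : frameW34nᵀ * frameW34n = ((15 : ℝ)) • 1 := by
  ext i j
  fin_cases i <;> fin_cases j <;>
    norm_num [frameW34n, Matrix.mul_apply, Fin.sum_univ_five, Matrix.vecHead, Matrix.vecTail,
      Matrix.one_apply, Matrix.cons_val_two, Matrix.cons_val_three, Matrix.cons_val_four]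

noncomputable def frameWn4e : Matrix (Fin 5) (Fin 2) ℝ :=
  !![(-4), (0); (3), (-2); (3), (4); (0), (3); (2), (-3)]

lemma frameWn4e_frame : frameWn4eᵀ * frameWn4e = ((38 : ℝ)) • 1 := by
  ext i j
  fin_cases i <;> fin_cases j <;>
    norm_num [frameWn4e, Matrix.mul_apply, Fin.sum_univ_five, Matrix.vecHead, Matrix.vecTail,
      Matrix.one_apply, Matrix.cons_val_two, Matrix.cons_val_three, Matrix.cons_val_four]

noncomputable def frameW3ne : Matrix (Fin 5) (Fin 2) ℝ :=
  !![(1), (-1); (-4), (0); (1), (3); (1), (-3); (1), (1)]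

lemma frameW3ne_frame : frameW3neᵀ * frameW3ne = ((20 : ℝ)) • 1 := by
  ext i j
  fin_cases i <;> fin_cases j <;>
    norm_num [frameW3ne, Matrix.mul_apply, Fin.sum_univ_five, Matrix.vecHead, Matrix.vecTail,
      Matrix.one_apply, Matrix.cons_val_two, Matrix.cons_val_three, Matrix.cons_val_four]

noncomputable def frameWnne : Matrix (Fin 5) (Fin 2) ℝ :=
  !![(2), (-4); (4), (1); (0), (-3); (2), (1); (2), (1)]

lemma frameWnne_frame : frameWnneᵀ * frameWnne = ((28 : ℝ)) • 1 := by
  ext i j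
  fin_cases i <;> fin_cases j <;>
    norm_num [frameWnne, Matrix.mul_apply, Fin.sum_univ_five, Matrix.vecHead, Matrix.vecTail,
      Matrix.one_apply, Matrix.cons_val_two, Matrix.cons_val_three, Matrix.cons_val_four]

noncomputable def frameW3nn : Matrix (Fin 5) (Fin 2) ℝ :=
  !![(2), (-2); (1), (0); (0), (3); (3), (1); (1), (1)]

lemma frameW3nn_frame : frameW3nnᵀ * frameW3nn = ((15 : ℝ)) • 1 := by
  ext i j
  fin_cases i <;> fin_cases j <;>
    norm_num [frameW3nn, Matrix.mul_apply, Fin.sum_univ_five, Matrix.vecHead, Matrix.vecTail,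
      Matrix.one_apply, Matrix.cons_val_two, Matrix.cons_val_three, Matrix.cons_val_four]

noncomputable def frameWn4n : Matrix (Fin 5) (Fin 2) ℝ :=
  !![(0), (2); (-3), (-3); (-1), (1); (4), (0); (2), (-4)]

lemma frameWn4n_frame : frameWn4nᵀ * frameWn4n = ((30 : ℝ)) • 1 := by
  ext i j
  fin_cases i <;> fin_cases j <;>
    norm_num [frameWn4n, Matrix.mul_apply, Fin.sum_univ_five, Matrix.vecHead, Matrix.vecTail,
      Matrix.one_apply, Matrix.cons_val_two, Matrix.cons_val_three, Matrix.cons_val_four]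

lemma frame_symm (W : Matrix (Fin 5) (Fin 2) ℝ) (N : ℝ) : (N⁻¹ • (W * Wᵀ)).IsSymm := by
  rw [Matrix.IsSymm, Matrix.transpose_smul, Matrix.transpose_mul, Matrix.transpose_transpose]

lemma frame_idem (W : Matrix (Fin 5) (Fin 2) ℝ) {N : ℝ} (hN : N ≠ 0)
    (hW : Wᵀ * W = N • 1) :
    (N⁻¹ • (W * Wᵀ)) * (N⁻¹ • (W * Wᵀ)) = N⁻¹ • (W * Wᵀ) := by
  have h1 : (W * Wᵀ) * (W * Wᵀ) = W * ((Wᵀ * W) * Wᵀ) := by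
    simp only [Matrix.mul_assoc]
  have h2 : (N • (1 : Matrix (Fin 2) (Fin 2) ℝ)) * Wᵀ = N • Wᵀ := by
    rw [Matrix.smul_mul, Matrix.one_mul]
  rw [Matrix.smul_mul, Matrix.mul_smul, h1, hW, h2, Matrix.mul_smul, smul_smul, smul_smul]
  congr 1
  field_simp

lemma frame_entry (W : Matrix (Fin 5) (Fin 2) ℝ) (N : ℝ) (x y : Fin 5) :
    (N⁻¹ • (W * Wᵀ)) x y = N⁻¹ * (W x 0 * W y 0 + W x 1 * W y 1) := by
  simp [Matrix.mul_apply, Fin.sum_univ_two]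

lemma goodProj_of_candle {V : Type*} [Fintype V] [DecidableEq V] (G : SimpleGraph V)
    (f : Fin (2 * 2 + 1) → V) (hbij : Function.Bijective f)
    (hf : ∀ x y : Fin (2 * 2 + 1), (singleCandle 2).Adj x y → G.Adj (f x) (f y)) :
    ∃ P, goodProj G P := by
  have a01 : G.Adj (f 0) (f 1) := hf 0 1 (by decide)
  have a02 : G.Adj (f 0) (f 2) := hf 0 2 (by decide)
  have a13 : G.Adj (f 1) (f 3) := hf 1 3 (by decide)
  have a14 : G.Adj (f 1) (f 4) := hf 1 4 (by decide)
  have a23 : G.Adj (f 2) (f 3) := hf 2 3 (by decide)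
  have a24 : G.Adj (f 2) (f 4) := hf 2 4 (by decide)
  have a34 : G.Adj (f 3) (f 4) := hf 3 4 (by decide)
  by_cases h03 : G.Adj (f 0) (f 3) <;> by_cases h04 : G.Adj (f 0) (f 4) <;>
    by_cases h12 : G.Adj (f 1) (f 2)
  · refine goodProj_of_pattern G f hbij (((23:ℝ))⁻¹ • (frameW34e * frameW34eᵀ)) (frame_symm _ _) (frame_idem _ (by norm_num) frameW34e_frame) ?_
    intro x y hxy
    fin_cases x <;> fin_cases y
    · exact absurd rfl hxy
    · exact iff_of_true (by rw [frame_entry]; norm_num [frameW34e]) a01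
    · exact iff_of_true (by rw [frame_entry]; norm_num [frameW34e]) a02
    · exact iff_of_true (by rw [frame_entry]; norm_num [frameW34e]) h03
    · exact iff_of_true (by rw [frame_entry]; norm_num [frameW34e]) h04
    · exact iff_of_true (by rw [frame_entry]; norm_num [frameW34e]) a01.symm
    · exact absurd rfl hxy
    · exact iff_of_true (by rw [frame_entry]; norm_num [frameW34e]) h12
    · exact iff_of_true (by rw [frame_entry]; norm_num [frameW34e]) a13
    · exact iff_of_true (by rw [frame_entry]; norm_num [frameW34e]) a14
    · exact iff_of_true (by rw [frame_entry]; norm_num [frameW34e]) a02.symm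
    · exact iff_of_true (by rw [frame_entry]; norm_num [frameW34e]) h12.symm
    · exact absurd rfl hxy
    · exact iff_of_true (by rw [frame_entry]; norm_num [frameW34e]) a23
    · exact iff_of_true (by rw [frame_entry]; norm_num [frameW34e]) a24
    · exact iff_of_true (by rw [frame_entry]; norm_num [frameW34e]) h03.symm
    · exact iff_of_true (by rw [frame_entry]; norm_num [frameW34e]) a13.symm
    · exact iff_of_true (by rw [frame_entry]; norm_num [frameW34e]) a23.symm
    · exact absurd rfl hxy
    · exact iff_of_true (by rw [frame_entry]; norm_num [frameW34e]) a34
    · exact iff_of_true (by rw [frame_entry]; norm_num [frameW34e]) h04.symm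
    · exact iff_of_true (by rw [frame_entry]; norm_num [frameW34e]) a14.symm
    · exact iff_of_true (by rw [frame_entry]; norm_num [frameW34e]) a24.symm
    · exact iff_of_true (by rw [frame_entry]; norm_num [frameW34e]) a34.symm
    · exact absurd rfl hxy
  · refine goodProj_of_pattern G f hbij (((15:ℝ))⁻¹ • (frameW34n * frameW34nᵀ)) (frame_symm _ _) (frame_idem _ (by norm_num) frameW34n_frame) ?_
    intro x y hxy
    fin_cases x <;> fin_cases y
    · exact absurd rfl hxy
    · exact iff_of_true (by rw [frame_entry]; norm_num [frameW34n]) a01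
    · exact iff_of_true (by rw [frame_entry]; norm_num [frameW34n]) a02
    · exact iff_of_true (by rw [frame_entry]; norm_num [frameW34n]) h03
    · exact iff_of_true (by rw [frame_entry]; norm_num [frameW34n]) h04
    · exact iff_of_true (by rw [frame_entry]; norm_num [frameW34n]) a01.symm
    · exact absurd rfl hxy
    · exact iff_of_false (not_not_intro (by rw [frame_entry]; norm_num [frameW34n])) h12
    · exact iff_of_true (by rw [frame_entry]; norm_num [frameW34n]) a13
    · exact iff_of_true (by rw [frame_entry]; norm_num [frameW34n]) a14
    · exact iff_of_true (by rw [frame_entry]; norm_num [frameW34n]) a02.symm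
    · exact iff_of_false (not_not_intro (by rw [frame_entry]; norm_num [frameW34n])) (fun hh => h12 hh.symm)
    · exact absurd rfl hxy
    · exact iff_of_true (by rw [frame_entry]; norm_num [frameW34n]) a23
    · exact iff_of_true (by rw [frame_entry]; norm_num [frameW34n]) a24
    · exact iff_of_true (by rw [frame_entry]; norm_num [frameW34n]) h03.symm
    · exact iff_of_true (by rw [frame_entry]; norm_num [frameW34n]) a13.symm
    · exact iff_of_true (by rw [frame_entry]; norm_num [frameW34n]) a23.symm
    · exact absurd rfl hxy
    · exact iff_of_true (by rw [frame_entry]; norm_num [frameW34n]) a34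
    · exact iff_of_true (by rw [frame_entry]; norm_num [frameW34n]) h04.symm
    · exact iff_of_true (by rw [frame_entry]; norm_num [frameW34n]) a14.symm
    · exact iff_of_true (by rw [frame_entry]; norm_num [frameW34n]) a24.symm
    · exact iff_of_true (by rw [frame_entry]; norm_num [frameW34n]) a34.symm
    · exact absurd rfl hxy
  · refine goodProj_of_pattern G f hbij (((20:ℝ))⁻¹ • (frameW3ne * frameW3neᵀ)) (frame_symm _ _) (frame_idem _ (by norm_num) frameW3ne_frame) ?_
    intro x y hxy
    fin_cases x <;> fin_cases y
    · exact absurd rfl hxy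
    · exact iff_of_true (by rw [frame_entry]; norm_num [frameW3ne]) a01
    · exact iff_of_true (by rw [frame_entry]; norm_num [frameW3ne]) a02
    · exact iff_of_true (by rw [frame_entry]; norm_num [frameW3ne]) h03
    · exact iff_of_false (not_not_intro (by rw [frame_entry]; norm_num [frameW3ne])) h04
    · exact iff_of_true (by rw [frame_entry]; norm_num [frameW3ne]) a01.symm
    · exact absurd rfl hxy
    · exact iff_of_true (by rw [frame_entry]; norm_num [frameW3ne]) h12
    · exact iff_of_true (by rw [frame_entry]; norm_num [frameW3ne]) a13
    · exact iff_of_true (by rw [frame_entry]; norm_num [frameW3ne]) a14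
    · exact iff_of_true (by rw [frame_entry]; norm_num [frameW3ne]) a02.symm
    · exact iff_of_true (by rw [frame_entry]; norm_num [frameW3ne]) h12.symm
    · exact absurd rfl hxy
    · exact iff_of_true (by rw [frame_entry]; norm_num [frameW3ne]) a23
    · exact iff_of_true (by rw [frame_entry]; norm_num [frameW3ne]) a24
    · exact iff_of_true (by rw [frame_entry]; norm_num [frameW3ne]) h03.symm
    · exact iff_of_true (by rw [frame_entry]; norm_num [frameW3ne]) a13.symm
    · exact iff_of_true (by rw [frame_entry]; norm_num [frameW3ne]) a23.symm
    · exact absurd rfl hxy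
    · exact iff_of_true (by rw [frame_entry]; norm_num [frameW3ne]) a34
    · exact iff_of_false (not_not_intro (by rw [frame_entry]; norm_num [frameW3ne])) (fun hh => h04 hh.symm)
    · exact iff_of_true (by rw [frame_entry]; norm_num [frameW3ne]) a14.symm
    · exact iff_of_true (by rw [frame_entry]; norm_num [frameW3ne]) a24.symm
    · exact iff_of_true (by rw [frame_entry]; norm_num [frameW3ne]) a34.symm
    · exact absurd rfl hxy
  · refine goodProj_of_pattern G f hbij (((15:ℝ))⁻¹ • (frameW3nn * frameW3nnᵀ)) (frame_symm _ _) (frame_idem _ (by norm_num) frameW3nn_frame) ?_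
    intro x y hxy
    fin_cases x <;> fin_cases y
    · exact absurd rfl hxy
    · exact iff_of_true (by rw [frame_entry]; norm_num [frameW3nn]) a01
    · exact iff_of_true (by rw [frame_entry]; norm_num [frameW3nn]) a02
    · exact iff_of_true (by rw [frame_entry]; norm_num [frameW3nn]) h03
    · exact iff_of_false (not_not_intro (by rw [frame_entry]; norm_num [frameW3nn])) h04
    · exact iff_of_true (by rw [frame_entry]; norm_num [frameW3nn]) a01.symm
    · exact absurd rfl hxy
    · exact iff_of_false (not_not_intro (by rw [frame_entry]; norm_num [frameW3nn])) h12
    · exact iff_of_true (by rw [frame_entry]; norm_num [frameW3nn]) a13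
    · exact iff_of_true (by rw [frame_entry]; norm_num [frameW3nn]) a14
    · exact iff_of_true (by rw [frame_entry]; norm_num [frameW3nn]) a02.symm
    · exact iff_of_false (not_not_intro (by rw [frame_entry]; norm_num [frameW3nn])) (fun hh => h12 hh.symm)
    · exact absurd rfl hxy
    · exact iff_of_true (by rw [frame_entry]; norm_num [frameW3nn]) a23
    · exact iff_of_true (by rw [frame_entry]; norm_num [frameW3nn]) a24
    · exact iff_of_true (by rw [frame_entry]; norm_num [frameW3nn]) h03.symm
    · exact iff_of_true (by rw [frame_entry]; norm_num [frameW3nn]) a13.symm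
    · exact iff_of_true (by rw [frame_entry]; norm_num [frameW3nn]) a23.symm
    · exact absurd rfl hxy
    · exact iff_of_true (by rw [frame_entry]; norm_num [frameW3nn]) a34
    · exact iff_of_false (not_not_intro (by rw [frame_entry]; norm_num [frameW3nn])) (fun hh => h04 hh.symm)
    · exact iff_of_true (by rw [frame_entry]; norm_num [frameW3nn]) a14.symm
    · exact iff_of_true (by rw [frame_entry]; norm_num [frameW3nn]) a24.symm
    · exact iff_of_true (by rw [frame_entry]; norm_num [frameW3nn]) a34.symm
    · exact absurd rfl hxy
  · refine goodProj_of_pattern G f hbij (((38:ℝ))⁻¹ • (frameWn4e * frameWn4eᵀ)) (frame_symm _ _) (frame_idem _ (by norm_num) frameWn4e_frame) ?_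
    intro x y hxy
    fin_cases x <;> fin_cases y
    · exact absurd rfl hxy
    · exact iff_of_true (by rw [frame_entry]; norm_num [frameWn4e]) a01
    · exact iff_of_true (by rw [frame_entry]; norm_num [frameWn4e]) a02
    · exact iff_of_false (not_not_intro (by rw [frame_entry]; norm_num [frameWn4e])) h03
    · exact iff_of_true (by rw [frame_entry]; norm_num [frameWn4e]) h04
    · exact iff_of_true (by rw [frame_entry]; norm_num [frameWn4e]) a01.symm
    · exact absurd rfl hxy
    · exact iff_of_true (by rw [frame_entry]; norm_num [frameWn4e]) h12
    · exact iff_of_true (by rw [frame_entry]; norm_num [frameWn4e]) a13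
    · exact iff_of_true (by rw [frame_entry]; norm_num [frameWn4e]) a14
    · exact iff_of_true (by rw [frame_entry]; norm_num [frameWn4e]) a02.symm
    · exact iff_of_true (by rw [frame_entry]; norm_num [frameWn4e]) h12.symm
    · exact absurd rfl hxy
    · exact iff_of_true (by rw [frame_entry]; norm_num [frameWn4e]) a23
    · exact iff_of_true (by rw [frame_entry]; norm_num [frameWn4e]) a24
    · exact iff_of_false (not_not_intro (by rw [frame_entry]; norm_num [frameWn4e])) (fun hh => h03 hh.symm)
    · exact iff_of_true (by rw [frame_entry]; norm_num [frameWn4e]) a13.symm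
    · exact iff_of_true (by rw [frame_entry]; norm_num [frameWn4e]) a23.symm
    · exact absurd rfl hxy
    · exact iff_of_true (by rw [frame_entry]; norm_num [frameWn4e]) a34
    · exact iff_of_true (by rw [frame_entry]; norm_num [frameWn4e]) h04.symm
    · exact iff_of_true (by rw [frame_entry]; norm_num [frameWn4e]) a14.symm
    · exact iff_of_true (by rw [frame_entry]; norm_num [frameWn4e]) a24.symm
    · exact iff_of_true (by rw [frame_entry]; norm_num [frameWn4e]) a34.symm
    · exact absurd rfl hxy
  · refine goodProj_of_pattern G f hbij (((30:ℝ))⁻¹ • (frameWn4n * frameWn4nᵀ)) (frame_symm _ _) (frame_idem _ (by norm_num) frameWn4n_frame) ?_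
    intro x y hxy
    fin_cases x <;> fin_cases y
    · exact absurd rfl hxy
    · exact iff_of_true (by rw [frame_entry]; norm_num [frameWn4n]) a01
    · exact iff_of_true (by rw [frame_entry]; norm_num [frameWn4n]) a02
    · exact iff_of_false (not_not_intro (by rw [frame_entry]; norm_num [frameWn4n])) h03
    · exact iff_of_true (by rw [frame_entry]; norm_num [frameWn4n]) h04
    · exact iff_of_true (by rw [frame_entry]; norm_num [frameWn4n]) a01.symm
    · exact absurd rfl hxy
    · exact iff_of_false (not_not_intro (by rw [frame_entry]; norm_num [frameWn4n])) h12
    · exact iff_of_true (by rw [frame_entry]; norm_num [frameWn4n]) a13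
    · exact iff_of_true (by rw [frame_entry]; norm_num [frameWn4n]) a14
    · exact iff_of_true (by rw [frame_entry]; norm_num [frameWn4n]) a02.symm
    · exact iff_of_false (not_not_intro (by rw [frame_entry]; norm_num [frameWn4n])) (fun hh => h12 hh.symm)
    · exact absurd rfl hxy
    · exact iff_of_true (by rw [frame_entry]; norm_num [frameWn4n]) a23
    · exact iff_of_true (by rw [frame_entry]; norm_num [frameWn4n]) a24
    · exact iff_of_false (not_not_intro (by rw [frame_entry]; norm_num [frameWn4n])) (fun hh => h03 hh.symm)
    · exact iff_of_true (by rw [frame_entry]; norm_num [frameWn4n]) a13.symm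
    · exact iff_of_true (by rw [frame_entry]; norm_num [frameWn4n]) a23.symm
    · exact absurd rfl hxy
    · exact iff_of_true (by rw [frame_entry]; norm_num [frameWn4n]) a34
    · exact iff_of_true (by rw [frame_entry]; norm_num [frameWn4n]) h04.symm
    · exact iff_of_true (by rw [frame_entry]; norm_num [frameWn4n]) a14.symm
    · exact iff_of_true (by rw [frame_entry]; norm_num [frameWn4n]) a24.symm
    · exact iff_of_true (by rw [frame_entry]; norm_num [frameWn4n]) a34.symm
    · exact absurd rfl hxy
  · refine goodProj_of_pattern G f hbij (((28:ℝ))⁻¹ • (frameWnne * frameWnneᵀ)) (frame_symm _ _) (frame_idem _ (by norm_num) frameWnne_frame) ?_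
    intro x y hxy
    fin_cases x <;> fin_cases y
    · exact absurd rfl hxy
    · exact iff_of_true (by rw [frame_entry]; norm_num [frameWnne]) a01
    · exact iff_of_true (by rw [frame_entry]; norm_num [frameWnne]) a02
    · exact iff_of_false (not_not_intro (by rw [frame_entry]; norm_num [frameWnne])) h03
    · exact iff_of_false (not_not_intro (by rw [frame_entry]; norm_num [frameWnne])) h04
    · exact iff_of_true (by rw [frame_entry]; norm_num [frameWnne]) a01.symm
    · exact absurd rfl hxy
    · exact iff_of_true (by rw [frame_entry]; norm_num [frameWnne]) h12
    · exact iff_of_true (by rw [frame_entry]; norm_num [frameWnne]) a13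
    · exact iff_of_true (by rw [frame_entry]; norm_num [frameWnne]) a14
    · exact iff_of_true (by rw [frame_entry]; norm_num [frameWnne]) a02.symm
    · exact iff_of_true (by rw [frame_entry]; norm_num [frameWnne]) h12.symm
    · exact absurd rfl hxy
    · exact iff_of_true (by rw [frame_entry]; norm_num [frameWnne]) a23
    · exact iff_of_true (by rw [frame_entry]; norm_num [frameWnne]) a24
    · exact iff_of_false (not_not_intro (by rw [frame_entry]; norm_num [frameWnne])) (fun hh => h03 hh.symm)
    · exact iff_of_true (by rw [frame_entry]; norm_num [frameWnne]) a13.symm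
    · exact iff_of_true (by rw [frame_entry]; norm_num [frameWnne]) a23.symm
    · exact absurd rfl hxy
    · exact iff_of_true (by rw [frame_entry]; norm_num [frameWnne]) a34
    · exact iff_of_false (not_not_intro (by rw [frame_entry]; norm_num [frameWnne])) (fun hh => h04 hh.symm)
    · exact iff_of_true (by rw [frame_entry]; norm_num [frameWnne]) a14.symm
    · exact iff_of_true (by rw [frame_entry]; norm_num [frameWnne]) a24.symm
    · exact iff_of_true (by rw [frame_entry]; norm_num [frameWnne]) a34.symm
    · exact absurd rfl hxy
  · refine goodProj_of_pattern G f hbij (((475:ℝ))⁻¹ • (frameWnnn * frameWnnnᵀ)) (frame_symm _ _) (frame_idem _ (by norm_num) frameWnnn_frame) ?_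
    intro x y hxy
    fin_cases x <;> fin_cases y
    · exact absurd rfl hxy
    · exact iff_of_true (by rw [frame_entry]; norm_num [frameWnnn]) a01
    · exact iff_of_true (by rw [frame_entry]; norm_num [frameWnnn]) a02
    · exact iff_of_false (not_not_intro (by rw [frame_entry]; norm_num [frameWnnn])) h03
    · exact iff_of_false (not_not_intro (by rw [frame_entry]; norm_num [frameWnnn])) h04
    · exact iff_of_true (by rw [frame_entry]; norm_num [frameWnnn]) a01.symm
    · exact absurd rfl hxy
    · exact iff_of_false (not_not_intro (by rw [frame_entry]; norm_num [frameWnnn])) h12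
    · exact iff_of_true (by rw [frame_entry]; norm_num [frameWnnn]) a13
    · exact iff_of_true (by rw [frame_entry]; norm_num [frameWnnn]) a14
    · exact iff_of_true (by rw [frame_entry]; norm_num [frameWnnn]) a02.symm
    · exact iff_of_false (not_not_intro (by rw [frame_entry]; norm_num [frameWnnn])) (fun hh => h12 hh.symm)
    · exact absurd rfl hxy
    · exact iff_of_true (by rw [frame_entry]; norm_num [frameWnnn]) a23
    · exact iff_of_true (by rw [frame_entry]; norm_num [frameWnnn]) a24
    · exact iff_of_false (not_not_intro (by rw [frame_entry]; norm_num [frameWnnn])) (fun hh => h03 hh.symm)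
    · exact iff_of_true (by rw [frame_entry]; norm_num [frameWnnn]) a13.symm
    · exact iff_of_true (by rw [frame_entry]; norm_num [frameWnnn]) a23.symm
    · exact absurd rfl hxy
    · exact iff_of_true (by rw [frame_entry]; norm_num [frameWnnn]) a34
    · exact iff_of_false (not_not_intro (by rw [frame_entry]; norm_num [frameWnnn])) (fun hh => h04 hh.symm)
    · exact iff_of_true (by rw [frame_entry]; norm_num [frameWnnn]) a14.symm
    · exact iff_of_true (by rw [frame_entry]; norm_num [frameWnnn]) a24.symm
    · exact iff_of_true (by rw [frame_entry]; norm_num [frameWnnn]) a34.symm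
    · exact absurd rfl hxy
section Forward
variable {V : Type*} [Fintype V] [DecidableEq V] {G : SimpleGraph V}

set_option linter.unusedSectionVars false
set_option maxHeartbeats 1000000

lemma trace_dichotomy {P : Matrix V V ℝ} (hsym : P.IsSymm) (hidem : P * P = P)
    (hcard : Fintype.card V = 5) : P.trace ≤ 2 ∨ (1 - P).trace ≤ 2 := by
  classical
  have hherm := isHermitian_of_isSymm hsym
  have hev : ∀ i, hherm.eigenvalues i = 0 ∨ hherm.eigenvalues i = 1 :=
    fun i => spectrum_mem_of_idem hidem (hherm.eigenvalues_mem_spectrum_real i)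
  have htr : P.trace = ∑ i, hherm.eigenvalues i := by
    have hd : P = (hherm.eigenvectorUnitary : Matrix V V ℝ) * diagonal hherm.eigenvalues *
        (star (hherm.eigenvectorUnitary : Matrix V V ℝ)) := by
      convert hherm.spectral_theorem using 2
      simp [Unitary.conjStarAlgAut_apply]
    conv_lhs => rw [hd]
    rw [Matrix.trace_mul_cycle, Matrix.UnitaryGroup.star_mul_self, Matrix.one_mul,
      Matrix.trace_diagonal]
  have hsum : ∑ i, hherm.eigenvalues i =
      ((Finset.univ.filter (fun i => hherm.eigenvalues i = 1)).card : ℝ) := by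
    rw [Finset.card_filter]
    push_cast
    apply Finset.sum_congr rfl
    intro i _
    rcases hev i with h | h <;> simp [h]
  set k := (Finset.univ.filter (fun i => hherm.eigenvalues i = 1)).card with hk
  have hk5 : k ≤ 5 := by
    calc k ≤ Finset.univ.card := Finset.card_filter_le _ _
    _ = 5 := by rw [Finset.card_univ, hcard]
  have htr1 : (1 - P).trace = 5 - P.trace := by
    rw [Matrix.trace_sub, Matrix.trace_one, hcard]
    norm_num
  rcases le_or_gt (k : ℝ) 2 with h | h
  · left; rw [htr, hsum]; exact h
  · right
    rw [htr1, htr, hsum]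
    have : (3 : ℝ) ≤ (k : ℝ) := by
      have : 2 < k := by exact_mod_cast h
      exact_mod_cast this
    linarith

lemma candle_of_goodProj (hconn : G.Connected) (hcard : Fintype.card V = 5)
    {P₀ : Matrix V V ℝ} (hP₀ : goodProj G P₀) :
    ∃ f : Fin (2 * 2 + 1) → V, Function.Bijective f ∧
      ∀ x y : Fin (2 * 2 + 1), (singleCandle 2).Adj x y → G.Adj (f x) (f y) := by
  classical
  suffices aux : ∀ P : Matrix V V ℝ, goodProj G P → P.trace ≤ 2 →
      ∃ f : Fin (2 * 2 + 1) → V, Function.Bijective f ∧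
        ∀ x y : Fin (2 * 2 + 1), (singleCandle 2).Adj x y → G.Adj (f x) (f y) by
    rcases trace_dichotomy hP₀.1 hP₀.2.1 hcard with h | h
    · exact aux P₀ hP₀ h
    · refine aux (1 - P₀) ⟨?_, ?_, ?_⟩ h
      · rw [Matrix.IsSymm, Matrix.transpose_sub, Matrix.transpose_one, hP₀.1]
      · rw [Matrix.mul_sub, Matrix.mul_one, Matrix.sub_mul, Matrix.one_mul, hP₀.2.1]
        simp
      · intro i j hij
        rw [← hP₀.2.2 i j hij]
        rw [Matrix.sub_apply, Matrix.one_apply_ne hij, zero_sub, neg_ne_zero]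
  clear hP₀ P₀
  intro P hP htrP
  obtain ⟨hsym, hidem, hpatt⟩ := hP
  have hsymm' : ∀ a b, P a b = P b a := fun a b => (Matrix.IsSymm.apply hsym b a).symm ▸ rfl
  have hS : ∀ a b, P a b = ∑ i, P a i * P i b := by
    intro a b
    conv_lhs => rw [← hidem]
    rw [Matrix.mul_apply]
  have hneigh : ∀ v : V, ∃ w, G.Adj v w := exists_neighbor hconn (by omega)
  have hdpos : ∀ a, 0 < P a a := by
    intro a
    obtain ⟨w, hw⟩ := hneigh a
    have hwa : P a w ≠ 0 := (hpatt a w hw.ne).mpr hw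
    have hPaa : P a a = ∑ i, P a i * P a i := by
      rw [hS a a]
      exact Finset.sum_congr rfl fun i _ => by rw [hsymm' i a]
    rw [hPaa]
    have hle : P a w * P a w ≤ ∑ i, P a i * P a i :=
      Finset.single_le_sum (f := fun i => P a i * P a i) (fun i _ => mul_self_nonneg _)
        (Finset.mem_univ w)
    have hpos := mul_self_pos.mpr hwa
    linarith
  by_cases hK5 : ∀ a b : V, a ≠ b → P a b ≠ 0
  · have adjall : ∀ a b : V, a ≠ b → G.Adj a b := fun a b h => (hpatt a b h).mp (hK5 a b h)
    have eqv := (Fintype.equivFinOfCardEq hcard).symm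
    have hne : ∀ i j : Fin 5, i ≠ j → eqv i ≠ eqv j := fun i j h hc => h (eqv.injective hc)
    exact candle_master G hcard (eqv 0) (eqv 1) (eqv 2) (eqv 3) (eqv 4)
      (hne 0 1 (by decide)) (hne 0 2 (by decide)) (hne 0 3 (by decide)) (hne 0 4 (by decide))
      (hne 1 2 (by decide)) (hne 1 3 (by decide)) (hne 1 4 (by decide)) (hne 2 3 (by decide))
      (hne 2 4 (by decide)) (hne 3 4 (by decide))
      (adjall _ _ (hne 0 1 (by decide))) (adjall _ _ (hne 0 2 (by decide)))
      (adjall _ _ (hne 1 3 (by decide))) (adjall _ _ (hne 1 4 (by decide)))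
      (adjall _ _ (hne 2 3 (by decide))) (adjall _ _ (hne 2 4 (by decide)))
      (adjall _ _ (hne 3 4 (by decide)))
  · push_neg at hK5
    obtain ⟨a, b, hab, hPab0⟩ := hK5
    have hApos : 0 < P a a := hdpos a
    have hBpos : 0 < P b b := hdpos b
    set A := P a a with hAdef
    set B := P b b with hBdef
    set x : V → ℝ := fun i => P a i with hxdef
    set y : V → ℝ := fun i => P b i with hydef
    have hxy0 : ∀ i, x i = P a i := fun i => rfl
    have hyy0 : ∀ i, y i = P b i := fun i => rfl
    have hxa : x a = A := rfl
    have hxb : x b = 0 := by rw [hxy0]; exact hPab0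
    have hya : y a = 0 := by rw [hyy0, ← hsymm' a b]; exact hPab0
    have hyb : y b = B := rfl
    have hxaNZ : x a ≠ 0 := by rw [hxa]; exact hApos.ne'
    have hybNZ : y b ≠ 0 := by rw [hyb]; exact hBpos.ne'
    have hxx : ∑ i, x i * x i = A := by
      rw [hAdef, hS a a]
      exact Finset.sum_congr rfl fun i _ => by rw [hxy0, hsymm' i a]
    have hyy : ∑ i, y i * y i = B := by
      rw [hBdef, hS b b]
      exact Finset.sum_congr rfl fun i _ => by rw [hyy0, hsymm' i b]
    have hxy : ∑ i, x i * y i = 0 := by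
      rw [← hPab0, hS a b]
      exact Finset.sum_congr rfl fun i _ => by rw [hxy0, hyy0, hsymm' i b]
    have hrowx : ∀ i, ∑ k, P i k * x k = x i := by
      intro i
      have h1 : ∑ k, P i k * x k = ∑ k, P i k * P k a :=
        Finset.sum_congr rfl fun k _ => by rw [hxy0, hsymm' a k]
      rw [h1, ← hS i a, hsymm' i a, hxy0]
    have hrowy : ∀ i, ∑ k, P i k * y k = y i := by
      intro i
      have h1 : ∑ k, P i k * y k = ∑ k, P i k * P k b :=
        Finset.sum_congr rfl fun k _ => by rw [hyy0, hsymm' b k]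
      rw [h1, ← hS i b, hsymm' i b, hyy0]
    have hcolx : ∀ j, ∑ k, x k * P k j = x j := by
      intro j
      have h1 : ∑ k, x k * P k j = ∑ k, P a k * P k j :=
        Finset.sum_congr rfl fun k _ => by rw [hxy0]
      rw [h1, ← hS a j, hxy0]
    have hcoly : ∀ j, ∑ k, y k * P k j = y j := by
      intro j
      have h1 : ∑ k, y k * P k j = ∑ k, P b k * P k j :=
        Finset.sum_congr rfl fun k _ => by rw [hyy0]
      rw [h1, ← hS b j, hyy0]
    set Q : Matrix V V ℝ := Matrix.of (fun i j => x i * x j / A + y i * y j / B) with hQdef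
    have hQapp : ∀ i j, Q i j = x i * x j / A + y i * y j / B := fun i j => rfl
    have hPQ : P * Q = Q := by
      ext i j
      rw [Matrix.mul_apply, hQapp]
      calc ∑ k, P i k * Q k j
          = ∑ k, (P i k * x k * (x j / A) + P i k * y k * (y j / B)) := by
            refine Finset.sum_congr rfl fun k _ => ?_
            rw [hQapp]; ring
        _ = (∑ k, P i k * x k) * (x j / A) + (∑ k, P i k * y k) * (y j / B) := by
            rw [Finset.sum_add_distrib, Finset.sum_mul, Finset.sum_mul]
        _ = x i * x j / A + y i * y j / B := by rw [hrowx i, hrowy i]; ring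
    have hQP : Q * P = Q := by
      ext i j
      rw [Matrix.mul_apply, hQapp]
      calc ∑ k, Q i k * P k j
          = ∑ k, ((x i / A) * (x k * P k j) + (y i / B) * (y k * P k j)) := by
            refine Finset.sum_congr rfl fun k _ => ?_
            rw [hQapp]; ring
        _ = (x i / A) * (∑ k, x k * P k j) + (y i / B) * (∑ k, y k * P k j) := by
            rw [Finset.sum_add_distrib, ← Finset.mul_sum, ← Finset.mul_sum]
        _ = x i * x j / A + y i * y j / B := by rw [hcolx j, hcoly j]; ring
    have hQQ : Q * Q = Q := by
      ext i j
      rw [Matrix.mul_apply, hQapp]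
      calc ∑ k, Q i k * Q k j
          = ∑ k, ((x i * x j / (A * A)) * (x k * x k) + ((x i * y j / (A * B)) * (x k * y k)
              + ((y i * x j / (A * B)) * (x k * y k) + (y i * y j / (B * B)) * (y k * y k)))) := by
            refine Finset.sum_congr rfl fun k _ => ?_
            rw [hQapp, hQapp]; ring
        _ = (x i * x j / (A * A)) * (∑ k, x k * x k) + ((x i * y j / (A * B)) * (∑ k, x k * y k)
              + ((y i * x j / (A * B)) * (∑ k, x k * y k)
                + (y i * y j / (B * B)) * (∑ k, y k * y k))) := by
            rw [Finset.sum_add_distrib, Finset.sum_add_distrib, Finset.sum_add_distrib,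
              ← Finset.mul_sum, ← Finset.mul_sum, ← Finset.mul_sum, ← Finset.mul_sum]
        _ = x i * x j / A + y i * y j / B := by
            rw [hxx, hyy, hxy]
            field_simp
            ring
    have hQsymm : ∀ i j, Q i j = Q j i := by
      intro i j; rw [hQapp, hQapp]; ring
    have htrQ : Q.trace = 2 := by
      have : Q.trace = ∑ i, (x i * x i / A + y i * y i / B) := by
        rw [Matrix.trace]
        exact Finset.sum_congr rfl fun i _ => hQapp i i
      rw [this, Finset.sum_add_distrib, ← Finset.sum_div, ← Finset.sum_div, hxx, hyy,
        div_self hApos.ne', div_self hBpos.ne']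
      norm_num
    have hRR : (P - Q) * (P - Q) = P - Q := by
      rw [Matrix.sub_mul, Matrix.mul_sub, Matrix.mul_sub, hidem, hPQ, hQP, hQQ]
      abel
    have hRsymm : ∀ i j, (P - Q) i j = (P - Q) j i := by
      intro i j
      rw [Matrix.sub_apply, Matrix.sub_apply, hsymm' i j, hQsymm i j]
    have htrR : (P - Q).trace = P.trace - 2 := by rw [Matrix.trace_sub, htrQ]
    have hRsum : ∑ i, ∑ j, (P - Q) i j * (P - Q) i j = (P - Q).trace := by
      rw [Matrix.trace]
      refine Finset.sum_congr rfl fun i _ => ?_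
      show ∑ j, (P - Q) i j * (P - Q) i j = (P - Q) i i
      conv_rhs => rw [← hRR]
      rw [Matrix.mul_apply]
      exact Finset.sum_congr rfl fun j _ => by rw [hRsymm j i]
    have hR0 : ∀ i j, (P - Q) i j = 0 := by
      have hnn : ∀ i ∈ Finset.univ, (0:ℝ) ≤ ∑ j, (P - Q) i j * (P - Q) i j :=
        fun i _ => Finset.sum_nonneg fun j _ => mul_self_nonneg _
      have hz : ∑ i, ∑ j, (P - Q) i j * (P - Q) i j = 0 := by
        refine le_antisymm ?_ (Finset.sum_nonneg hnn)
        rw [hRsum, htrR]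
        linarith
      intro i j
      have h2 := (Finset.sum_eq_zero_iff_of_nonneg hnn).mp hz i (Finset.mem_univ i)
      have h3 := (Finset.sum_eq_zero_iff_of_nonneg
        (fun j _ => mul_self_nonneg ((P - Q) i j))).mp h2 j (Finset.mem_univ j)
      exact mul_self_eq_zero.mp h3
    have hform : ∀ i j, P i j = x i * x j / A + y i * y j / B := by
      intro i j
      have h0 := hR0 i j
      rw [Matrix.sub_apply, sub_eq_zero] at h0
      rw [h0, hQapp]
    have hadj : ∀ i j, i ≠ j → (G.Adj i j ↔ x i * x j / A + y i * y j / B ≠ 0) := by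
      intro i j hij
      rw [← hform, ← hpatt i j hij]
    have hnz : ∀ i, x i ≠ 0 ∨ y i ≠ 0 := by
      intro i
      by_contra hcon
      push_neg at hcon
      have h0 := hform i i
      rw [hcon.1, hcon.2] at h0
      have : P i i = 0 := by rw [h0]; ring
      exact absurd this (hdpos i).ne'
    have adjX : ∀ i j, i ≠ j → y i = 0 → x i ≠ 0 → x j ≠ 0 → G.Adj i j := by
      intro i j hij hyi hxi hxj
      rw [hadj i j hij, hyi]
      have : x i * x j / A ≠ 0 := div_ne_zero (mul_ne_zero hxi hxj) hApos.ne'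
      intro hc
      apply this
      have : (0:ℝ) * y j / B = 0 := by ring
      linarith [hc, this]
    have adjY : ∀ i j, i ≠ j → x i = 0 → y i ≠ 0 → y j ≠ 0 → G.Adj i j := by
      intro i j hij hxi hyi hyj
      rw [hadj i j hij, hxi]
      have h1 : y i * y j / B ≠ 0 := div_ne_zero (mul_ne_zero hyi hyj) hBpos.ne'
      intro hc
      apply h1
      have h2 : (0:ℝ) * x j / A = 0 := by ring
      linarith [hc, h2]
    have notAdj_inner : ∀ i j, i ≠ j → ¬G.Adj i j → x i * x j * B + y i * y j * A = 0 := by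
      intro i j hij hn
      have h0 : x i * x j / A + y i * y j / B = 0 := by
        by_contra hne
        exact hn ((hadj i j hij).mpr hne)
      field_simp at h0
      linarith
    have adjSS : ∀ i j k, i ≠ j → x k ≠ 0 → y k ≠ 0 → y i ≠ 0 → y j ≠ 0 →
        (x i * x k * B + y i * y k * A = 0) → (x j * x k * B + y j * y k * A = 0) →
        G.Adj i j := by
      intro i j k hij hxk hyk hyi hyj e1 e2
      rw [hadj i j hij]
      intro hc
      have e3 : x i * x j * B + y i * y j * A = 0 := by
        field_simp at hc
        linarith
      have key : y i * y j * A * (y k * y k * A + x k * x k * B) = 0 := by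
        linear_combination x k * x k * B * e3 - x j * x k * B * e1 + y i * y k * A * e2
      have hpos : 0 < y k * y k * A + x k * x k * B := by
        have h1 : 0 < y k * y k * A := mul_pos (mul_self_pos.mpr hyk) hApos
        have h2 : 0 < x k * x k * B := mul_pos (mul_self_pos.mpr hxk) hBpos
        linarith
      have := mul_ne_zero (mul_ne_zero (mul_ne_zero hyi hyj) hApos.ne') hpos.ne'
      exact this key
    -- extract the other three vertices
    have hcompl : ({a, b}ᶜ : Finset V).card = 3 := by
      rw [Finset.card_compl, Finset.card_insert_of_notMem (by simp [hab]),
        Finset.card_singleton, hcard]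
    obtain ⟨c, d, e, hcd, hce, hde, hset⟩ := Finset.card_eq_three.mp hcompl
    have hmemc : c ∉ ({a, b} : Finset V) := by
      rw [← Finset.mem_compl, hset]; simp
    have hmemd : d ∉ ({a, b} : Finset V) := by
      rw [← Finset.mem_compl, hset]; simp
    have hmeme : e ∉ ({a, b} : Finset V) := by
      rw [← Finset.mem_compl, hset]; simp
    simp only [Finset.mem_insert, Finset.mem_singleton, not_or] at hmemc hmemd hmeme
    have nab : a ≠ b := hab
    have nac : a ≠ c := fun h => hmemc.1 h.symm
    have nad : a ≠ d := fun h => hmemd.1 h.symm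
    have nae : a ≠ e := fun h => hmeme.1 h.symm
    have nbc : b ≠ c := fun h => hmemc.2 h.symm
    have nbd : b ≠ d := fun h => hmemd.2 h.symm
    have nbe : b ≠ e := fun h => hmeme.2 h.symm
    have ncd : c ≠ d := hcd
    have nce : c ≠ e := hce
    have nde : d ≠ e := hde
    have huniv : ∀ v : V, v = a ∨ v = b ∨ v = c ∨ v = d ∨ v = e := by
      intro v
      by_cases hva : v = a
      · exact Or.inl hva
      by_cases hvb : v = b
      · exact Or.inr (Or.inl hvb)
      have : v ∈ ({a, b}ᶜ : Finset V) := by simp [hva, hvb]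
      rw [hset] at this
      simp only [Finset.mem_insert, Finset.mem_singleton] at this
      tauto
    have huniveq : (Finset.univ : Finset V) = {a, b, c, d, e} := by
      symm
      apply Finset.eq_univ_iff_forall.mpr
      intro v
      rcases huniv v with h | h | h | h | h <;> simp [h]
    have hxy5 : x c * y c + x d * y d + x e * y e = 0 := by
      have h0 := hxy
      rw [huniveq] at h0
      rw [Finset.sum_insert (by simp [nab, nac, nad, nae]),
        Finset.sum_insert (by simp [nbc, nbd, nbe]),
        Finset.sum_insert (by simp [ncd, nce]),
        Finset.sum_insert (by simp [nde]),
        Finset.sum_singleton] at h0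
      rw [hya, hxb] at h0
      linarith [h0]
    -- connectivity-based contradiction when there are no stray vertices
    have conncase : (x c = 0 ∨ y c = 0) → (x d = 0 ∨ y d = 0) → (x e = 0 ∨ y e = 0) → False := by
      intro h1 h2 h3
      have hall : ∀ v : V, x v = 0 ∨ y v = 0 := by
        intro v
        rcases huniv v with h | h | h | h | h <;> subst h
        · exact Or.inr hya
        · exact Or.inl hxb
        · exact h1
        · exact h2
        · exact h3
      have step : ∀ u w : V, G.Adj u w → y u = 0 → y w = 0 := by
        intro u w ha hyu
        by_contra hyw
        have hxw : x w = 0 := (hall w).resolve_right hyw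
        have h4 := (hadj u w ha.ne).mp ha
        apply h4
        rw [hyu, hxw]
        ring
      have hwalk : ∀ (u w : V), G.Walk u w → y u = 0 → y w = 0 := by
        intro u w p
        induction p with
        | nil => exact id
        | cons h q ih => exact fun h0 => ih (step _ _ h h0)
      have : y b = 0 := hwalk a b ((hconn a b).some) hya
      rw [hyb] at this
      exact hBpos.ne' this
    have tri : ∀ w : V, (x w ≠ 0 ∧ y w = 0) ∨ (x w = 0 ∧ y w ≠ 0) ∨ (x w ≠ 0 ∧ y w ≠ 0) := by
      intro w
      rcases hnz w with h | h
      · by_cases h2 : y w = 0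
        · exact Or.inl ⟨h, h2⟩
        · exact Or.inr (Or.inr ⟨h, h2⟩)
      · by_cases h1 : x w = 0
        · exact Or.inr (Or.inl ⟨h1, h⟩)
        · exact Or.inr (Or.inr ⟨h1, h⟩)

    rcases tri c with ⟨hxc, hyc⟩ | ⟨hxc, hyc⟩ | ⟨hxc, hyc⟩ <;>
      rcases tri d with ⟨hxd, hyd⟩ | ⟨hxd, hyd⟩ | ⟨hxd, hyd⟩ <;>
      rcases tri e with ⟨hxe, hye⟩ | ⟨hxe, hye⟩ | ⟨hxe, hye⟩
    · exact (conncase (Or.inr hyc) (Or.inr hyd) (Or.inr hye)).elim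
    · exact (conncase (Or.inr hyc) (Or.inr hyd) (Or.inl hxe)).elim
    · have hzc : x c * y c = 0 := mul_eq_zero.mpr (Or.inr hyc)
      have hzd : x d * y d = 0 := mul_eq_zero.mpr (Or.inr hyd)
      have hzs : x e * y e = 0 := by linarith [hxy5]
      exact ((mul_ne_zero hxe hye) hzs).elim
    · exact (conncase (Or.inr hyc) (Or.inl hxd) (Or.inr hye)).elim
    · exact (conncase (Or.inr hyc) (Or.inl hxd) (Or.inl hxe)).elim
    · have hzc : x c * y c = 0 := mul_eq_zero.mpr (Or.inr hyc)
      have hzd : x d * y d = 0 := mul_eq_zero.mpr (Or.inl hxd)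
      have hzs : x e * y e = 0 := by linarith [hxy5]
      exact ((mul_ne_zero hxe hye) hzs).elim
    · have hzc : x c * y c = 0 := mul_eq_zero.mpr (Or.inr hyc)
      have hze : x e * y e = 0 := mul_eq_zero.mpr (Or.inr hye)
      have hzs : x d * y d = 0 := by linarith [hxy5]
      exact ((mul_ne_zero hxd hyd) hzs).elim
    · have hzc : x c * y c = 0 := mul_eq_zero.mpr (Or.inr hyc)
      have hze : x e * y e = 0 := mul_eq_zero.mpr (Or.inl hxe)
      have hzs : x d * y d = 0 := by linarith [hxy5]
      exact ((mul_ne_zero hxd hyd) hzs).elim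
    · exact candle_master G hcard b d e a c (nbd) (nbe) (nab.symm) (nbc) (nde) (nad.symm) (ncd.symm) (nae.symm) (nce.symm) (nac) (adjY b d nbd hxb hybNZ hyd) (adjY b e nbe hxb hybNZ hye) ((adjX a d nad hya hxaNZ hxd)).symm ((adjX c d ncd hyc hxc hxd)).symm ((adjX a e nae hya hxaNZ hxe)).symm ((adjX c e nce hyc hxc hxe)).symm (adjX a c nac hya hxaNZ hxc)
    · exact (conncase (Or.inl hxc) (Or.inr hyd) (Or.inr hye)).elim
    · exact (conncase (Or.inl hxc) (Or.inr hyd) (Or.inl hxe)).elim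
    · have hzc : x c * y c = 0 := mul_eq_zero.mpr (Or.inl hxc)
      have hzd : x d * y d = 0 := mul_eq_zero.mpr (Or.inr hyd)
      have hzs : x e * y e = 0 := by linarith [hxy5]
      exact ((mul_ne_zero hxe hye) hzs).elim
    · exact (conncase (Or.inl hxc) (Or.inl hxd) (Or.inr hye)).elim
    · exact (conncase (Or.inl hxc) (Or.inl hxd) (Or.inl hxe)).elim
    · have hzc : x c * y c = 0 := mul_eq_zero.mpr (Or.inl hxc)
      have hzd : x d * y d = 0 := mul_eq_zero.mpr (Or.inl hxd)
      have hzs : x e * y e = 0 := by linarith [hxy5]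
      exact ((mul_ne_zero hxe hye) hzs).elim
    · have hzc : x c * y c = 0 := mul_eq_zero.mpr (Or.inl hxc)
      have hze : x e * y e = 0 := mul_eq_zero.mpr (Or.inr hye)
      have hzs : x d * y d = 0 := by linarith [hxy5]
      exact ((mul_ne_zero hxd hyd) hzs).elim
    · have hzc : x c * y c = 0 := mul_eq_zero.mpr (Or.inl hxc)
      have hze : x e * y e = 0 := mul_eq_zero.mpr (Or.inl hxe)
      have hzs : x d * y d = 0 := by linarith [hxy5]
      exact ((mul_ne_zero hxd hyd) hzs).elim
    · exact candle_master G hcard a d e b c (nad) (nae) (nab) (nac) (nde) (nbd.symm) (ncd.symm) (nbe.symm) (nce.symm) (nbc) (adjX a d nad hya hxaNZ hxd) (adjX a e nae hya hxaNZ hxe) ((adjY b d nbd hxb hybNZ hyd)).symm ((adjY c d ncd hxc hyc hyd)).symm ((adjY b e nbe hxb hybNZ hye)).symm ((adjY c e nce hxc hyc hye)).symm (adjY b c nbc hxb hybNZ hyc)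
    · have hzd : x d * y d = 0 := mul_eq_zero.mpr (Or.inr hyd)
      have hze : x e * y e = 0 := mul_eq_zero.mpr (Or.inr hye)
      have hzs : x c * y c = 0 := by linarith [hxy5]
      exact ((mul_ne_zero hxc hyc) hzs).elim
    · have hzd : x d * y d = 0 := mul_eq_zero.mpr (Or.inr hyd)
      have hze : x e * y e = 0 := mul_eq_zero.mpr (Or.inl hxe)
      have hzs : x c * y c = 0 := by linarith [hxy5]
      exact ((mul_ne_zero hxc hyc) hzs).elim
    · exact candle_master G hcard b c e a d (nbc) (nbe) (nab.symm) (nbd) (nce) (nac.symm) (ncd) (nae.symm) (nde.symm) (nad) (adjY b c nbc hxb hybNZ hyc) (adjY b e nbe hxb hybNZ hye) ((adjX a c nac hya hxaNZ hxc)).symm ((adjX d c ncd.symm hyd hxd hxc)).symm ((adjX a e nae hya hxaNZ hxe)).symm ((adjX d e nde hyd hxd hxe)).symm (adjX a d nad hya hxaNZ hxd)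
    · have hzd : x d * y d = 0 := mul_eq_zero.mpr (Or.inl hxd)
      have hze : x e * y e = 0 := mul_eq_zero.mpr (Or.inr hye)
      have hzs : x c * y c = 0 := by linarith [hxy5]
      exact ((mul_ne_zero hxc hyc) hzs).elim
    · have hzd : x d * y d = 0 := mul_eq_zero.mpr (Or.inl hxd)
      have hze : x e * y e = 0 := mul_eq_zero.mpr (Or.inl hxe)
      have hzs : x c * y c = 0 := by linarith [hxy5]
      exact ((mul_ne_zero hxc hyc) hzs).elim
    · exact candle_master G hcard a c e b d (nac) (nae) (nab) (nad) (nce) (nbc.symm) (ncd) (nbe.symm) (nde.symm) (nbd) (adjX a c nac hya hxaNZ hxc) (adjX a e nae hya hxaNZ hxe) ((adjY b c nbc hxb hybNZ hyc)).symm ((adjY d c ncd.symm hxd hyd hyc)).symm ((adjY b e nbe hxb hybNZ hye)).symm ((adjY d e nde hxd hyd hye)).symm (adjY b d nbd hxb hybNZ hyd)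
    · exact candle_master G hcard b c d a e (nbc) (nbd) (nab.symm) (nbe) (ncd) (nac.symm) (nce) (nad.symm) (nde) (nae) (adjY b c nbc hxb hybNZ hyc) (adjY b d nbd hxb hybNZ hyd) ((adjX a c nac hya hxaNZ hxc)).symm ((adjX e c nce.symm hye hxe hxc)).symm ((adjX a d nad hya hxaNZ hxd)).symm ((adjX e d nde.symm hye hxe hxd)).symm (adjX a e nae hya hxaNZ hxe)
    · exact candle_master G hcard a c d b e (nac) (nad) (nab) (nae) (ncd) (nbc.symm) (nce) (nbd.symm) (nde) (nbe) (adjX a c nac hya hxaNZ hxc) (adjX a d nad hya hxaNZ hxd) ((adjY b c nbc hxb hybNZ hyc)).symm ((adjY e c nce.symm hxe hye hyc)).symm ((adjY b d nbd hxb hybNZ hyd)).symm ((adjY e d nde.symm hxe hye hyd)).symm (adjY b e nbe hxb hybNZ hye)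
    · by_cases hcd' : G.Adj c d <;> by_cases hce' : G.Adj c e <;> by_cases hde' : G.Adj d e
      · exact candle_master G hcard c a b d e (nac.symm) (nbc.symm) (ncd) (nce) (nab) (nad) (nae) (nbd) (nbe) (nde) ((adjX a c nac hya hxaNZ hxc)).symm ((adjY b c nbc hxb hybNZ hyc)).symm (adjX a d nad hya hxaNZ hxd) (adjX a e nae hya hxaNZ hxe) (adjY b d nbd hxb hybNZ hyd) (adjY b e nbe hxb hybNZ hye) hde'
      · exact candle_master G hcard d a b e c (nad.symm) (nbd.symm) (nde) (ncd.symm) (nab) (nae) (nac) (nbe) (nbc) (nce.symm) ((adjX a d nad hya hxaNZ hxd)).symm ((adjY b d nbd hxb hybNZ hyd)).symm (adjX a e nae hya hxaNZ hxe) (adjX a c nac hya hxaNZ hxc) (adjY b e nbe hxb hybNZ hye) (adjY b c nbc hxb hybNZ hyc) hce'.symm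
      · exact candle_master G hcard c a b d e (nac.symm) (nbc.symm) (ncd) (nce) (nab) (nad) (nae) (nbd) (nbe) (nde) ((adjX a c nac hya hxaNZ hxc)).symm ((adjY b c nbc hxb hybNZ hyc)).symm (adjX a d nad hya hxaNZ hxd) (adjX a e nae hya hxaNZ hxe) (adjY b d nbd hxb hybNZ hyd) (adjY b e nbe hxb hybNZ hye) hde'
      · exact candle_master G hcard e a b c d (nae.symm) (nbe.symm) (nce.symm) (nde.symm) (nab) (nac) (nad) (nbc) (nbd) (ncd) ((adjX a e nae hya hxaNZ hxe)).symm ((adjY b e nbe hxb hybNZ hye)).symm (adjX a c nac hya hxaNZ hxc) (adjX a d nad hya hxaNZ hxd) (adjY b c nbc hxb hybNZ hyc) (adjY b d nbd hxb hybNZ hyd) hcd'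
      · exact candle_master G hcard c a b d e (nac.symm) (nbc.symm) (ncd) (nce) (nab) (nad) (nae) (nbd) (nbe) (nde) ((adjX a c nac hya hxaNZ hxc)).symm ((adjY b c nbc hxb hybNZ hyc)).symm (adjX a d nad hya hxaNZ hxd) (adjX a e nae hya hxaNZ hxe) (adjY b d nbd hxb hybNZ hyd) (adjY b e nbe hxb hybNZ hye) hde'
      · exact candle_master G hcard d a b c e (nad.symm) (nbd.symm) (ncd.symm) (nde) (nab) (nac) (nae) (nbc) (nbe) (nce) ((adjX a d nad hya hxaNZ hxd)).symm ((adjY b d nbd hxb hybNZ hyd)).symm (adjX a c nac hya hxaNZ hxc) (adjX a e nae hya hxaNZ hxe) (adjY b c nbc hxb hybNZ hyc) (adjY b e nbe hxb hybNZ hye) hce'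
      · exact candle_master G hcard c a b d e (nac.symm) (nbc.symm) (ncd) (nce) (nab) (nad) (nae) (nbd) (nbe) (nde) ((adjX a c nac hya hxaNZ hxc)).symm ((adjY b c nbc hxb hybNZ hyc)).symm (adjX a d nad hya hxaNZ hxd) (adjX a e nae hya hxaNZ hxe) (adjY b d nbd hxb hybNZ hyd) (adjY b e nbe hxb hybNZ hye) hde'
      · exfalso
        have e1 : x d * x c * B + y d * y c * A = 0 := notAdj_inner d c ncd.symm (fun h => hcd' h.symm)
        have e2 : x e * x c * B + y e * y c * A = 0 := notAdj_inner e c nce.symm (fun h => hce' h.symm)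
        exact hde' (adjSS d e c nde hxc hyc hyd hye e1 e2)

end Forward
/-- A connected graph `G` on exactly `5` vertices has `q(G) = 2` iff `G` contains a
spanning subgraph isomorphic to the single-ended candle `G'_2`. -/
theorem stmt18 {V : Type*} [Fintype V] [DecidableEq V] (G : SimpleGraph V)
    (hconn : G.Connected) (hcard : Fintype.card V = 5) :
    qGraph G = 2 ↔ ∃ f : Fin (2 * 2 + 1) → V, Function.Bijective f ∧
      ∀ x y : Fin (2 * 2 + 1), (singleCandle 2).Adj x y → G.Adj (f x) (f y) := by
  constructor
  · intro hq
    obtain ⟨P, hP⟩ := goodProj_of_qGraph_eq_two hconn hcard hq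
    exact candle_of_goodProj hconn hcard hP
  · rintro ⟨f, hbij, hf⟩
    obtain ⟨P, hP⟩ := goodProj_of_candle G f hbij hf
    exact qGraph_eq_two_of_goodProj hconn hcard hP
end

section
/- Let k ≥ 2 and let A ∈ S(G_k) be a real symmetric matrix with exactly two distinct eigenvalues. Then each of the two eigenvalues of A occurs with multiplicity exactly k. -/
open Matrix

/-- A Hermitian real matrix whose eigenvalues all lie in `{c, d}` is annihilated by
`(X - c)(X - d)`. -/
lemma ann_aux {n : ℕ} (A : Matrix (Fin n) (Fin n) ℝ) (hA : A.IsHermitian) (c d : ℝ)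
    (h : ∀ i, hA.eigenvalues i = c ∨ hA.eigenvalues i = d) :
    (A - c • 1) * (A - d • 1) = 0 := by
  set U := (hA.eigenvectorUnitary : Matrix (Fin n) (Fin n) ℝ) with hUdef
  have hU1 : U * star U = 1 := Matrix.mem_unitaryGroup_iff.mp hA.eigenvectorUnitary.2
  have hU2 : star U * U = 1 := Matrix.mem_unitaryGroup_iff'.mp hA.eigenvectorUnitary.2
  have hdiag : (diagonal (RCLike.ofReal ∘ hA.eigenvalues) : Matrix (Fin n) (Fin n) ℝ)
      = diagonal hA.eigenvalues := by
    congr 1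
  have key : ∀ e : ℝ, A - e • 1 = U * (diagonal (fun i => hA.eigenvalues i - e)) * star U := by
    intro e
    have h1 : U * (e • (1 : Matrix (Fin n) (Fin n) ℝ)) * star U = e • 1 := by
      rw [Matrix.mul_smul, Matrix.mul_one, Matrix.smul_mul, hU1]
    have h2 : (diagonal (fun i => hA.eigenvalues i - e) : Matrix (Fin n) (Fin n) ℝ)
        = diagonal hA.eigenvalues - e • 1 := by
      rw [← Matrix.diagonal_one, ← Matrix.diagonal_smul, ← Matrix.diagonal_sub]
      simp [Pi.smul_def]
    rw [h2, Matrix.mul_sub, Matrix.sub_mul, h1]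
    congr 1
    rw [← hdiag]
    have hspt := hA.spectral_theorem
    rw [Unitary.conjStarAlgAut_apply] at hspt
    exact hspt
  rw [key c, key d]
  have expand : (U * (diagonal fun i => hA.eigenvalues i - c) * star U) *
      (U * (diagonal fun i => hA.eigenvalues i - d) * star U) =
      U * ((diagonal fun i => hA.eigenvalues i - c) * (diagonal fun i => hA.eigenvalues i - d)) * star U := by
    rw [Matrix.mul_assoc, Matrix.mul_assoc, ← Matrix.mul_assoc (star U) _ _, ← Matrix.mul_assoc (star U) _ _,
      hU2, Matrix.one_mul, ← Matrix.mul_assoc, ← Matrix.mul_assoc, Matrix.mul_assoc U]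
  rw [expand, Matrix.diagonal_mul_diagonal]
  have : (fun i => (hA.eigenvalues i - c) * (hA.eigenvalues i - d)) = fun _ => (0:ℝ) := by
    funext i
    rcases h i with h' | h' <;> rw [h'] <;> ring
  rw [this, Matrix.diagonal_zero, Matrix.mul_zero, Matrix.zero_mul]

/-- Splitting a sum over `range (2m)` into pairs. -/
lemma sum_range_two_mul_aux (g : ℕ → ℝ) (m : ℕ) :
    ∑ i ∈ Finset.range (2*m), g i = ∑ j ∈ Finset.range m, (g (2*j) + g (2*j+1)) := by
  induction m with
  | zero => simp
  | succ m ih =>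
    rw [show 2*(m+1) = 2*m+1+1 by ring, Finset.sum_range_succ, Finset.sum_range_succ,
      Finset.sum_range_succ, ih, add_assoc]

/-- If `k ≥ 2` and `A ∈ S(G_k)` has exactly two distinct eigenvalues, then each
eigenvalue of `A` has multiplicity exactly `k`. -/
theorem stmt19 (k : ℕ) (hk : 2 ≤ k)
    (A : Matrix (Fin (2 * k)) (Fin (2 * k)) ℝ)
    (hA : A ∈ SOfGraph (doubleCandle k))
    (hspec : (spectrum ℝ A).ncard = 2) :
    ∀ μ ∈ spectrum ℝ A,
      Module.finrank ℝ (LinearMap.ker (Matrix.toLin' (A - μ • 1))) = k := by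
  intro μ hμ
  classical
  obtain ⟨x, y, hxy, hS⟩ := Set.ncard_eq_two.mp hspec
  have hμxy : μ = x ∨ μ = y := by
    rw [hS] at hμ; simpa using hμ
  set ν : ℝ := if μ = x then y else x with hν
  have hνμ : ν ≠ μ := by
    rw [hν]; split_ifs with h
    · intro hh; apply hxy; rw [← h]; exact hh.symm
    · exact fun hh => h hh.symm
  have hSμν : spectrum ℝ A = {μ, ν} := by
    rw [hS]
    rcases hμxy with h | h
    · simp [hν, h]
    · have hne : μ ≠ x := fun hc => hxy (hc.symm.trans h)
      rw [hν, if_neg hne, h]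
      exact Set.pair_comm x y
  have hsymm : A.IsSymm := hA.1
  have hherm : A.IsHermitian := by
    rwa [Matrix.IsHermitian, conjTranspose_eq_transpose_of_trivial]
  have heig : ∀ i, hherm.eigenvalues i = ν ∨ hherm.eigenvalues i = μ := by
    intro i
    have h := hherm.eigenvalues_mem_spectrum_real i
    rw [hSμν] at h
    simpa [or_comm] using h
  have hzero : (A - ν • 1) * (A - μ • 1) = 0 := ann_aux A hherm ν μ heig
  have hzero' : (A - μ • 1) * (A - ν • 1) = 0 :=
    ann_aux A hherm μ ν (fun i => (heig i).symm)
  -- A*A as a linear combination of A and 1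
  have hAA : A * A = (μ + ν) • A - (μ * ν) • 1 := by
    have expand : (A - μ • 1) * (A - ν • 1)
        = A * A - (μ + ν) • A + (μ * ν) • 1 := by
      rw [Matrix.sub_mul, Matrix.mul_sub, Matrix.mul_sub, Matrix.smul_mul, Matrix.smul_mul,
        Matrix.mul_smul, Matrix.mul_one, Matrix.one_mul, Matrix.mul_smul, Matrix.mul_one,
        smul_smul, add_smul]
      abel
    rw [hzero'] at expand
    have h5 := expand.symm
    calc A * A = A * A - (μ + ν) • A + (μ * ν) • 1 + ((μ + ν) • A - (μ * ν) • 1) := by abel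
    _ = (μ + ν) • A - (μ * ν) • 1 := by rw [h5, zero_add]
  -- diagonal pairs sum to μ + ν
  have pair : ∀ j : ℕ, ∀ hj : j < k,
      A ⟨2*j, by omega⟩ ⟨2*j, by omega⟩ + A ⟨2*j+1, by omega⟩ ⟨2*j+1, by omega⟩ = μ + ν := by
    intro j hj
    set a : Fin (2*k) := ⟨2*j, by omega⟩ with ha
    set b : Fin (2*k) := ⟨2*j+1, by omega⟩ with hb
    have hne : a ≠ b := by
      intro h
      have : (2*j : ℕ) = 2*j+1 := congrArg Fin.val h
      omega
    have hadj : (doubleCandle k).Adj a b := by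
      rw [doubleCandle, SimpleGraph.fromRel_adj]
      refine ⟨hne, Or.inl ?_⟩
      show ((2*j : ℕ) + 1) / 2 + 1 = ((2*j+1 : ℕ) + 1) / 2
      omega
    have hab0 : A a b ≠ 0 := (hA.2 a b hne).mpr hadj
    have hsum : (A * A) a b = A a a * A a b + A a b * A b b := by
      rw [Matrix.mul_apply]
      rw [← Finset.sum_subset (Finset.subset_univ ({a, b} : Finset (Fin (2*k))))]
      · rw [Finset.sum_pair hne]
      · intro c _ hc
        simp only [Finset.mem_insert, Finset.mem_singleton, not_or] at hc
        obtain ⟨hca, hcb⟩ := hc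
        rcases eq_or_ne (A a c) 0 with h0 | h0
        · rw [h0, zero_mul]
        rcases eq_or_ne (A c b) 0 with h1 | h1
        · rw [h1, mul_zero]
        exfalso
        have hadj1 := (hA.2 a c (Ne.symm hca)).mp h0
        have hadj2 := (hA.2 c b hcb).mp h1
        rw [doubleCandle, SimpleGraph.fromRel_adj] at hadj1 hadj2
        obtain ⟨-, h1'⟩ := hadj1
        obtain ⟨-, h2'⟩ := hadj2
        have hav : (a.val : ℕ) = 2*j := rfl
        have hbv : (b.val : ℕ) = 2*j+1 := rfl
        rw [hav] at h1'
        rw [hbv] at h2'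
        omega
    have h2 : (A * A) a b = (μ + ν) * A a b := by
      rw [hAA]
      simp [Matrix.sub_apply, Matrix.smul_apply, Matrix.one_apply_ne hne]
    have h3 : A a a * A a b + A a b * A b b = (μ + ν) * A a b := hsum.symm.trans h2
    have h4 : (A a a + A b b) * A a b = (μ + ν) * A a b := by linear_combination h3
    exact mul_right_cancel₀ hab0 h4
  -- trace of A
  have htr : Matrix.trace A = (k : ℝ) * (μ + ν) := by
    set g : ℕ → ℝ := fun i => if h : i < 2*k then A ⟨i, h⟩ ⟨i, h⟩ else 0 with hg
    have h1 : Matrix.trace A = ∑ i ∈ Finset.range (2*k), g i := by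
      rw [Matrix.trace, ← Fin.sum_univ_eq_sum_range g (2*k)]
      apply Finset.sum_congr rfl
      intro i _
      simp [Matrix.diag, hg, i.isLt]
    rw [h1, sum_range_two_mul_aux]
    have h2 : ∀ j ∈ Finset.range k, g (2*j) + g (2*j+1) = μ + ν := by
      intro j hjm
      have hj := Finset.mem_range.mp hjm
      rw [hg]
      simp only []
      rw [dif_pos (by omega : 2*j < 2*k), dif_pos (by omega : 2*j+1 < 2*k)]
      exact pair j hj
    rw [Finset.sum_congr rfl h2, Finset.sum_const, Finset.card_range, nsmul_eq_mul]
  -- the projection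
  set M := A - μ • 1 with hM
  have hsub : ν - μ ≠ 0 := sub_ne_zero.mpr hνμ
  have hMM : M * M = (ν - μ) • M := by
    have hdecomp : M = (A - ν • 1) + (ν - μ) • (1 : Matrix (Fin (2*k)) (Fin (2*k)) ℝ) := by
      rw [hM, sub_smul]; abel
    calc M * M = M * ((A - ν • 1) + (ν - μ) • 1) := by rw [← hdecomp]
    _ = M * (A - ν • 1) + (ν - μ) • (M * 1) := by
        rw [Matrix.mul_add, Matrix.mul_smul]
    _ = (ν - μ) • M := by rw [hzero', Matrix.mul_one, zero_add]
  set P := (ν - μ)⁻¹ • M with hP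
  have hPP : P * P = P := by
    rw [hP, Matrix.smul_mul, Matrix.mul_smul, hMM, smul_smul, smul_smul,
      mul_assoc, inv_mul_cancel₀ hsub, mul_one]
  set f := Matrix.toLin' P with hf
  have hff : f ∘ₗ f = f := by
    rw [hf, ← Matrix.toLin'_mul, hPP]
  have hproj : LinearMap.IsProj (LinearMap.range f) f :=
    ⟨fun x => LinearMap.mem_range_self f x,
     fun x hx => by
      obtain ⟨y, rfl⟩ := hx
      simpa using LinearMap.ext_iff.mp hff y⟩
  have htrP : LinearMap.trace ℝ _ f = (Module.finrank ℝ (LinearMap.range f) : ℝ) := hproj.trace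
  have htrP2 : LinearMap.trace ℝ _ f = Matrix.trace P := by
    rw [LinearMap.trace_eq_matrix_trace ℝ (Pi.basisFun ℝ (Fin (2*k))) f,
      LinearMap.toMatrix_eq_toMatrix', hf, LinearMap.toMatrix'_toLin']
  have htrPval : Matrix.trace P = (k : ℝ) := by
    rw [hP, Matrix.trace_smul, hM, Matrix.trace_sub, Matrix.trace_smul, Matrix.trace_one, htr]
    have hcard : (Fintype.card (Fin (2*k)) : ℝ) = 2 * k := by simp
    rw [hcard]
    rw [smul_eq_mul, smul_eq_mul, inv_mul_eq_iff_eq_mul₀ hsub]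
    ring
  have hrange : Module.finrank ℝ (LinearMap.range f) = k := by
    have : ((Module.finrank ℝ (LinearMap.range f) : ℝ)) = (k : ℝ) := by
      rw [← htrP, htrP2, htrPval]
    exact_mod_cast this
  have hkerEq : LinearMap.ker (Matrix.toLin' (A - μ • 1)) = LinearMap.ker f := by
    rw [hf, hP, ← hM]
    have : Matrix.toLin' ((ν - μ)⁻¹ • M) = (ν - μ)⁻¹ • Matrix.toLin' M := by
      simp
    rw [this, LinearMap.ker_smul _ _ (inv_ne_zero hsub)]
  have hrn := LinearMap.finrank_range_add_finrank_ker f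
  have hdim : Module.finrank ℝ (Fin (2*k) → ℝ) = 2*k := by simp
  rw [hdim, hrange] at hrn
  rw [hkerEq]
  omega
end
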